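/- arXiv:2301.10437 — 2 statements merged into one kernel-verified Lean document; each statement's English description precedes it below -/
import Mathlib

section
/- Let E be an exact category with enough projectives P and let T be a support τ-tilting subcategory of E. Then T is a tilting subcategory of E if and only if every P ∈ P admits a conflation P ↣ T⁰ ↠ T¹ with T⁰, T¹ ∈ T whose inflation P ↣ T⁰ is a left T-approximation. -/
open CategoryTheory CategoryTheory.Limits ZeroObject

namespace TauTilting

universe w v u

/-- A class of "conflations" (kernel–cokernel pairs) on an additive category,
the datum underlying an exact structure in the sense of Quillen. -/
structure ConflationStruct (C : Type u) [Category.{v} C] [Preadditive C] where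
  /-- `IsConflation f g` means that `X ↣ Y ↠ Z` given by `f, g` is a conflation. -/
  IsConflation : ∀ ⦃X Y Z : C⦄, (X ⟶ Y) → (Y ⟶ Z) → Prop

namespace ConflationStruct

variable {C : Type u} [Category.{v} C] [Preadditive C] (S : ConflationStruct C)

/-- A morphism is an inflation if it occurs as the first map of a conflation. -/
def IsInflation {X Y : C} (f : X ⟶ Y) : Prop :=
  ∃ (Z : C) (g : Y ⟶ Z), S.IsConflation f g

/-- A morphism is a deflation if it occurs as the second map of a conflation. -/
def IsDeflation {Y Z : C} (g : Y ⟶ Z) : Prop :=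
  ∃ (X : C) (f : X ⟶ Y), S.IsConflation f g

/-- Quillen's axioms for an exact structure: conflations are kernel-cokernel pairs,
the class of conflations is closed under isomorphisms, identities are inflations and
deflations, inflations and deflations are closed under composition, pushouts of
inflations along arbitrary morphisms exist and are inflations, and dually. -/
structure IsExactStructure : Prop where
  ker_coker : ∀ {X Y Z : C} {f : X ⟶ Y} {g : Y ⟶ Z}, S.IsConflation f g →
    ∃ w : f ≫ g = 0, Nonempty (IsLimit (KernelFork.ofι f w)) ∧
      Nonempty (IsColimit (CokernelCofork.ofπ g w))
  iso_closed : ∀ {X X' Y Y' Z Z' : C} (eX : X' ≅ X) (eY : Y' ≅ Y) (eZ : Z' ≅ Z)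
    {f : X ⟶ Y} {g : Y ⟶ Z}, S.IsConflation f g →
    S.IsConflation (eX.hom ≫ f ≫ eY.inv) (eY.hom ≫ g ≫ eZ.inv)
  id_inflation : ∀ X : C, S.IsInflation (𝟙 X)
  id_deflation : ∀ X : C, S.IsDeflation (𝟙 X)
  inflation_comp : ∀ {X Y Z : C} {f : X ⟶ Y} {g : Y ⟶ Z},
    S.IsInflation f → S.IsInflation g → S.IsInflation (f ≫ g)
  deflation_comp : ∀ {X Y Z : C} {f : X ⟶ Y} {g : Y ⟶ Z},
    S.IsDeflation f → S.IsDeflation g → S.IsDeflation (f ≫ g)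
  pushout_inflation : ∀ {X Y Z : C} (f : X ⟶ Y) (h : X ⟶ Z), S.IsInflation f →
    ∃ (W : C) (h' : Y ⟶ W) (f' : Z ⟶ W), IsPushout f h h' f' ∧ S.IsInflation f'
  pullback_deflation : ∀ {X Y Z : C} (g : X ⟶ Z) (h : Y ⟶ Z), S.IsDeflation g →
    ∃ (W : C) (h' : W ⟶ X) (g' : W ⟶ Y), IsPullback h' g' g h ∧ S.IsDeflation g'

/-- An object `P` is projective relative to the exact structure: `Hom(P,-)` sends
conflations to short exact sequences, equivalently morphisms out of `P` lift along
deflations. -/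
def IsProjObj (P : C) : Prop :=
  ∀ ⦃Y Z : C⦄ (g : Y ⟶ Z), S.IsDeflation g → ∀ u : P ⟶ Z, ∃ v : P ⟶ Y, v ≫ g = u

/-- The class of projective objects. -/
def projClass : Set C := {P | S.IsProjObj P}

/-- The exact category has enough projectives. -/
def HasEnoughProjectives : Prop :=
  ∀ X : C, ∃ (P : C) (p : P ⟶ X), S.IsProjObj P ∧ S.IsDeflation p

/-- `Fac T` : objects admitting a deflation from an object of `T`. -/
def Fac (T : Set C) : Set C :=
  {X | ∃ (T' : C) (g : T' ⟶ X), T' ∈ T ∧ S.IsDeflation g}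

/-- `Sub T` : objects admitting an inflation into an object of `T`. -/
def Sub (T : Set C) : Set C :=
  {X | ∃ (T' : C) (f : X ⟶ T'), T' ∈ T ∧ S.IsInflation f}

/-- `Ext¹(X, Y) = 0`, expressed by the splitting of all conflations `Y ↣ E ↠ X`. -/
def ext1Zero (X Y : C) : Prop :=
  ∀ (E : C) (f : Y ⟶ E) (g : E ⟶ X), S.IsConflation f g → ∃ s : X ⟶ E, s ≫ g = 𝟙 X

/-- A morphism is admissible if it factors as a deflation followed by an inflation. -/
def IsAdmissible {X Y : C} (f : X ⟶ Y) : Prop :=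
  ∃ (K : C) (d : X ⟶ K) (i : K ⟶ Y), S.IsDeflation d ∧ S.IsInflation i ∧ d ≫ i = f

end ConflationStruct

section Approx

variable {C : Type u} [Category.{v} C]

/-- `f : P ⟶ X` is a left `T`-approximation. -/
def LeftApprox (T : Set C) {P X : C} (f : P ⟶ X) : Prop :=
  X ∈ T ∧ ∀ (T' : C), T' ∈ T → ∀ u : P ⟶ T', ∃ v : X ⟶ T', f ≫ v = u

/-- `f : X ⟶ M` is a right `T`-approximation. -/
def RightApprox (T : Set C) {X M : C} (f : X ⟶ M) : Prop :=
  X ∈ T ∧ ∀ (T' : C), T' ∈ T → ∀ u : T' ⟶ M, ∃ v : T' ⟶ X, v ≫ f = u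

/-- A class of objects closed under direct summands. -/
def SummandClosed (T : Set C) : Prop :=
  ∀ {X Z : C}, Z ∈ T → ∀ (i : X ⟶ Z) (r : Z ⟶ X), i ≫ r = 𝟙 X → X ∈ T

end Approx

section Additive

variable {C : Type u} [Category.{v} C] [Preadditive C] [HasZeroObject C] [HasBinaryBiproducts C]

/-- An additively closed subcategory: closed under isomorphisms, finite direct sums
and direct summands. -/
structure AdditivelyClosed (T : Set C) : Prop where
  mem_of_iso : ∀ {X Y : C}, (X ≅ Y) → X ∈ T → Y ∈ T
  zero_mem : (0 : C) ∈ T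
  biprod_mem : ∀ {X Y : C}, X ∈ T → Y ∈ T → (X ⊞ Y) ∈ T
  summand_mem : SummandClosed T

/-- An object is indecomposable if it is nonzero and any biproduct decomposition is
trivial. -/
def IsIndecomposable (X : C) : Prop :=
  ¬ IsZero X ∧ ∀ (A B : C), (X ≅ A ⊞ B) → IsZero A ∨ IsZero B

/-- The cardinality of the set of isomorphism classes of indecomposable objects in `T`. -/
noncomputable def numIndec (T : Set C) : Cardinal :=
  Cardinal.mk
    (Quot fun (X Y : {X : C // X ∈ T ∧ IsIndecomposable X}) => Nonempty ((X : C) ≅ (Y : C)))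

end Additive

section AddOf

variable {C : Type u} [Category.{v} C] [Preadditive C] [HasFiniteBiproducts C]

/-- The additive closure of a class of objects : direct summands of finite direct
sums of its objects. -/
def addOf (X : Set C) : Set C :=
  {Y | ∃ (n : ℕ) (f : Fin n → C), (∀ j, f j ∈ X) ∧
    ∃ (i : Y ⟶ ⨁ f) (r : (⨁ f) ⟶ Y), i ≫ r = 𝟙 Y}

/-- A Krull-Schmidt category: every object is a finite direct sum of objects with
local endomorphism ring. -/
def IsKrullSchmidt (C : Type u) [Category.{v} C] [Preadditive C] [HasFiniteBiproducts C] : Prop :=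
  ∀ X : C, ∃ (n : ℕ) (f : Fin n → C), (∀ j, IsLocalRing (End (f j))) ∧ Nonempty (X ≅ ⨁ f)

end AddOf

namespace ConflationStruct

variable {C : Type u} [Category.{v} C] [Preadditive C] (S : ConflationStruct C)

section TauTilt

/-- The existence of an exact sequence `P → T⁰ ↠ T¹` with `T⁰, T¹ ∈ T` whose first
map is a left `T`-approximation; the exact sequence is encoded by the factorization
of the first map as a deflation onto its image followed by an inflation which is a
kernel of the deflation `T⁰ ↠ T¹`. -/
def ApproxSeq (T : Set C) (P : C) : Prop :=
  ∃ (K T0 T1 : C) (d : P ⟶ K) (i : K ⟶ T0) (g : T0 ⟶ T1),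
    T1 ∈ T ∧ S.IsDeflation d ∧ S.IsConflation i g ∧ LeftApprox T (d ≫ i)

variable [HasZeroObject C] [HasBinaryBiproducts C]

/-- A τ-rigid subcategory: additively closed with `Ext¹(T, Fac T) = 0`. -/
def IsTauRigid (T : Set C) : Prop :=
  AdditivelyClosed T ∧ ∀ T' ∈ T, ∀ X ∈ S.Fac T, S.ext1Zero T' X

/-- A support τ-tilting subcategory. -/
def IsSupportTauTilting (T : Set C) : Prop :=
  S.IsTauRigid T ∧ ∀ P ∈ S.projClass, S.ApproxSeq T P

/-- Condition (A): every projective admits an admissible left `T`-approximation. -/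
def CondA (T : Set C) : Prop :=
  ∀ P ∈ S.projClass, ∃ (T' : C) (f : P ⟶ T'), LeftApprox T f ∧ S.IsAdmissible f

end TauTilt

section Relative

/-- `g` is a deflation of the full exact subcategory supported on `D` (i.e. it is part
of a conflation all of whose terms belong to `D`; the source and target are recorded
separately where needed). -/
def DeflationIn (D : Set C) {Y Z : C} (g : Y ⟶ Z) : Prop :=
  ∃ (X : C) (f : X ⟶ Y), X ∈ D ∧ S.IsConflation f g

/-- `P` is a projective object of the full exact subcategory supported on `D`. -/
def IsProjRel (D : Set C) (P : C) : Prop :=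
  P ∈ D ∧ ∀ ⦃Y Z : C⦄ (g : Y ⟶ Z), Y ∈ D → Z ∈ D → S.DeflationIn D g →
    ∀ u : P ⟶ Z, ∃ v : P ⟶ Y, v ≫ g = u

/-- `Ext¹(X,Y) = 0` computed in the full exact subcategory supported on `D`. -/
def ext1ZeroRel (D : Set C) (X Y : C) : Prop :=
  ∀ (E : C) (f : Y ⟶ E) (g : E ⟶ X), E ∈ D → S.IsConflation f g →
    ∃ s : X ⟶ E, s ≫ g = 𝟙 X

/-- `extSuccZeroRel S D n X Y` says `Ext^{n+1}(X, Y) = 0` in the full exact subcategory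
supported on `D`, via dimension shifting along syzygies. -/
def extSuccZeroRel (D : Set C) : ℕ → C → C → Prop
  | 0 => fun X Y => S.ext1ZeroRel D X Y
  | (n+1) => fun X Y => ∀ (K P : C) (i : K ⟶ P) (p : P ⟶ X),
      K ∈ D → S.IsProjRel D P → S.IsConflation i p → extSuccZeroRel D n K Y

/-- `Ext^{n+1}(X,Y) = 0` in the ambient exact category. -/
def extSuccZero (n : ℕ) (X Y : C) : Prop := S.extSuccZeroRel Set.univ n X Y

end Relative

section Tilting

variable [HasZeroObject C] [HasBinaryBiproducts C]

/-- A (1-)tilting subcategory of the ambient exact category (with enough projectives):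
additively closed, self-orthogonal for all `Ext^i`, `i ≥ 1`, of projective dimension at
most one, and every projective admits a conflation `P ↣ T⁰ ↠ T¹` with `T⁰, T¹ ∈ T`. -/
def IsTilting (T : Set C) : Prop :=
  AdditivelyClosed T ∧
  (∀ T1 ∈ T, ∀ T2 ∈ T, ∀ n : ℕ, S.extSuccZero n T1 T2) ∧
  (∀ T' ∈ T, ∀ Y : C, S.extSuccZero 1 T' Y) ∧
  (∀ P ∈ S.projClass, ∃ (T0 T1 : C) (f : P ⟶ T0) (g : T0 ⟶ T1),
    T0 ∈ T ∧ T1 ∈ T ∧ S.IsConflation f g)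

/-- A tilting subcategory of the full exact subcategory supported on `D` (whose
projectives are the relative projectives). -/
def IsTiltingRel (D T : Set C) : Prop :=
  AdditivelyClosed T ∧ T ⊆ D ∧
  (∀ T1 ∈ T, ∀ T2 ∈ T, ∀ n : ℕ, S.extSuccZeroRel D n T1 T2) ∧
  (∀ T' ∈ T, ∀ Y ∈ D, S.extSuccZeroRel D 1 T' Y) ∧
  (∀ P : C, S.IsProjRel D P → ∃ (T0 T1 : C) (f : P ⟶ T0) (g : T0 ⟶ T1),
    T0 ∈ T ∧ T1 ∈ T ∧ S.IsConflation f g)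

end Tilting

section Pairs

/-- `⊥₁ D`. -/
def perp1 (D : Set C) : Set C := {X | ∀ Y ∈ D, S.ext1Zero X Y}

/-- `T^⊥₀`. -/
def perp0 (T : Set C) : Set C := {Y | ∀ T' ∈ T, ∀ f : T' ⟶ Y, f = 0}

/-- A torsion class: closed under factor objects and extensions. -/
def IsTorsionClass (D : Set C) : Prop :=
  (∀ {X Y : C} (g : X ⟶ Y), X ∈ D → S.IsDeflation g → Y ∈ D) ∧
  (∀ {X Y Z : C} {f : X ⟶ Y} {g : Y ⟶ Z}, S.IsConflation f g → X ∈ D → Z ∈ D → Y ∈ D)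

/-- A torsion pair `(D, F)`. -/
def IsTorsionPair (D F : Set C) : Prop :=
  (∀ X ∈ D, ∀ Y ∈ F, ∀ f : X ⟶ Y, f = 0) ∧
  (∀ X : C, ∃ (D0 F0 : C) (i : D0 ⟶ X) (p : X ⟶ F0), D0 ∈ D ∧ F0 ∈ F ∧ S.IsConflation i p)

/-- A τ-cotorsion pair `(Cc, D)`. -/
def IsTauCotorsionPair (Cc D : Set C) : Prop :=
  Cc = S.perp1 D ∧
  ∀ P ∈ S.projClass, ∃ (K D0 C0 : C) (d : P ⟶ K) (i : K ⟶ D0) (g : D0 ⟶ C0),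
    D0 ∈ Cc ∧ D0 ∈ D ∧ C0 ∈ Cc ∧ S.IsDeflation d ∧ S.IsConflation i g ∧
    LeftApprox D (d ≫ i)

/-- A (complete) cotorsion pair `(Cc, D)`. -/
def IsCotorsionPair (Cc D : Set C) : Prop :=
  SummandClosed Cc ∧ SummandClosed D ∧
  (∀ X ∈ Cc, ∀ Y ∈ D, S.ext1Zero X Y) ∧
  (∀ X : C, ∃ (D0 C0 : C) (f : D0 ⟶ C0) (g : C0 ⟶ X),
    D0 ∈ D ∧ C0 ∈ Cc ∧ S.IsConflation f g) ∧
  (∀ X : C, ∃ (D1 C1 : C) (f : X ⟶ D1) (g : D1 ⟶ C1),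
    D1 ∈ D ∧ C1 ∈ Cc ∧ S.IsConflation f g)

/-- Admissibly contravariantly finite subcategory. -/
def IsACF (T : Set C) : Prop :=
  ∀ X : C, ∃ (T' : C) (f : T' ⟶ X), RightApprox T f ∧ S.IsAdmissible f

end Pairs

end ConflationStruct

/-- A weakly idempotent complete additive category: every section has a cokernel. -/
def WeaklyIdempotentComplete (C : Type u) [Category.{v} C] [Preadditive C] : Prop :=
  ∀ {X Y : C} (s : X ⟶ Y), (∃ r : Y ⟶ X, s ≫ r = 𝟙 X) → HasCokernel s


namespace ConflationStruct

variable {C : Type u} [Category.{v} C] [Preadditive C] (S : ConflationStruct C)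

section ET

/-- Membership in the ideal `I` of the category of projectives: morphisms `f`
between projectives with `Hom(f, T') = 0` for all `T' ∈ T`. -/
def memIdeal (T : Set C) {Q Q' : C} (f : Q ⟶ Q') : Prop :=
  S.IsProjObj Q ∧ S.IsProjObj Q' ∧ ∀ T' ∈ T, ∀ g : Q' ⟶ T', f ≫ g = 0

/-- `A_T`: the objects killed by the ideal `I`. -/
def AT (T : Set C) : Set C :=
  {X | ∀ ⦃Q Q' : C⦄ (f : Q ⟶ Q'), S.memIdeal T f → ∀ h : Q' ⟶ X, f ≫ h = 0}

/-- The conflation structure induced on a full subcategory: conflations of the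
ambient category all of whose terms lie in the subcategory. -/
def structOn (D : Set C) : ConflationStruct (ObjectProperty.FullSubcategory (fun X : C => X ∈ D)) :=
  ⟨fun _ _ _ f g => S.IsConflation f.hom g.hom⟩

variable [HasFiniteBiproducts C]

/-- `P_T`: additive closure of the images of admissible left `T`-approximations of
projectives. -/
def PTset (T : Set C) : Set C :=
  addOf {K | ∃ (Q T0 : C) (d : Q ⟶ K) (i : K ⟶ T0),
    S.IsProjObj Q ∧ S.IsDeflation d ∧ S.IsInflation i ∧ LeftApprox T (d ≫ i)}

end ET

section NTilting

/-- `T^⊥ = {Y | Ext^i(T', Y) = 0  for all i ≥ 1, T' ∈ T}`. -/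
def rperp (T : Set C) : Set C :=
  {Y | ∀ T' ∈ T, ∀ n : ℕ, S.extSuccZero n T' Y}

/-- `Cores S D n X` : `X` admits an exact sequence
`X ↣ Y₀ → ⋯ → Y_{n-1} ↠ Y_n` with all `Yᵢ ∈ D`. -/
def Cores (D : Set C) : ℕ → C → Prop
  | 0 => fun X => X ∈ D
  | (n+1) => fun X => ∃ (Y K : C) (i : X ⟶ Y) (p : Y ⟶ K),
      Y ∈ D ∧ S.IsConflation i p ∧ Cores D n K

/-- An `n`-tilting subcategory in the sense of Sauter: `T^⊥` has enough projectives
given by `T`, and every object has a `T^⊥`-coresolution of length `n`. -/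
def IsNTilting (T : Set C) (n : ℕ) : Prop :=
  T ⊆ S.rperp T ∧
  (∀ T' ∈ T, ∀ Y ∈ S.rperp T, S.ext1Zero T' Y) ∧
  (∀ Y ∈ S.rperp T, ∃ (K T' : C) (i : K ⟶ T') (p : T' ⟶ Y),
    T' ∈ T ∧ K ∈ S.rperp T ∧ S.IsConflation i p) ∧
  (∀ X : C, S.Cores (S.rperp T) n X)

/-- `P^{<∞}`: objects of finite projective dimension. -/
def Pfin : Set C := {X | ∃ n : ℕ, ∀ Y : C, S.extSuccZero n X Y}

end NTilting

section TauObj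

variable [HasZeroObject C] [HasBinaryBiproducts C]

/-- Variant of `ApproxSeq` where the left approximation is required to be nonzero. -/
def ApproxSeqNonzero (T : Set C) (P : C) : Prop :=
  ∃ (K T0 T1 : C) (d : P ⟶ K) (i : K ⟶ T0) (g : T0 ⟶ T1),
    T1 ∈ T ∧ S.IsDeflation d ∧ S.IsConflation i g ∧ LeftApprox T (d ≫ i) ∧ d ≫ i ≠ 0

/-- A τ-tilting subcategory: support τ-tilting such that every nonzero projective
admits a nonzero such approximation sequence. -/
def IsTauTiltingSubcat (T : Set C) : Prop :=
  S.IsSupportTauTilting T ∧ ∀ P ∈ S.projClass, ¬ IsZero P → S.ApproxSeqNonzero T P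

end TauObj

end ConflationStruct

section K0

variable {C : Type u} [Category.{v} C] [Preadditive C]

/-- Relations for the Grothendieck group of an exact subcategory: conflation
relations together with isomorphism relations. -/
def K0ExRels (S : ConflationStruct C) (D : Set C) :
    Set (FreeAbelianGroup {X : C // X ∈ D}) :=
  {x | (∃ (A B E : {X : C // X ∈ D}) (f : (A : C) ⟶ (B : C)) (g : (B : C) ⟶ (E : C)),
          S.IsConflation f g ∧
          x = FreeAbelianGroup.of B - FreeAbelianGroup.of A - FreeAbelianGroup.of E) ∨
       (∃ (A B : {X : C // X ∈ D}), Nonempty ((A : C) ≅ (B : C)) ∧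
          x = FreeAbelianGroup.of A - FreeAbelianGroup.of B)}

/-- The Grothendieck group of the full exact subcategory supported on `D`. -/
def K0Ex (S : ConflationStruct C) (D : Set C) :=
  FreeAbelianGroup {X : C // X ∈ D} ⧸ AddSubgroup.closure (K0ExRels S D)

noncomputable instance (S : ConflationStruct C) (D : Set C) : AddCommGroup (K0Ex S D) :=
  QuotientAddGroup.Quotient.addCommGroup _

variable [HasBinaryBiproducts C]

/-- Relations for the split Grothendieck group of an additive subcategory. -/
def K0SplitRels (T : Set C) : Set (FreeAbelianGroup {X : C // X ∈ T}) :=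
  {x | (∃ (A B E : {X : C // X ∈ T}), Nonempty ((E : C) ≅ (A : C) ⊞ (B : C)) ∧
          x = FreeAbelianGroup.of E - FreeAbelianGroup.of A - FreeAbelianGroup.of B) ∨
       (∃ (A B : {X : C // X ∈ T}), Nonempty ((A : C) ≅ (B : C)) ∧
          x = FreeAbelianGroup.of A - FreeAbelianGroup.of B)}

/-- The split Grothendieck group of the additive subcategory supported on `T`. -/
def K0Split (T : Set C) :=
  FreeAbelianGroup {X : C // X ∈ T} ⧸ AddSubgroup.closure (K0SplitRels T)

noncomputable instance (T : Set C) : AddCommGroup (K0Split T) :=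
  QuotientAddGroup.Quotient.addCommGroup _

end K0

end TauTilting

namespace TauTilting

open CategoryTheory CategoryTheory.Limits

section AuxLemmas

variable {C : Type u} [Category.{v} C] [Preadditive C] {S : ConflationStruct C}

lemma conf_comp_zero (hS : S.IsExactStructure) {X Y Z : C} {f : X ⟶ Y} {g : Y ⟶ Z}
    (h : S.IsConflation f g) : f ≫ g = 0 := by
  obtain ⟨w, -, -⟩ := hS.ker_coker h
  exact w

lemma conf_coker_desc (hS : S.IsExactStructure) {X Y Z V : C} {f : X ⟶ Y} {g : Y ⟶ Z}
    (h : S.IsConflation f g) (t : Y ⟶ V) (ht : f ≫ t = 0) :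
    ∃ φ : Z ⟶ V, g ≫ φ = t := by
  obtain ⟨w, -, ⟨hc⟩⟩ := hS.ker_coker h
  obtain ⟨l, hl⟩ := CokernelCofork.IsColimit.desc' hc t ht
  exact ⟨l, by simpa using hl⟩

lemma conf_ker_lift (hS : S.IsExactStructure) {X Y Z V : C} {f : X ⟶ Y} {g : Y ⟶ Z}
    (h : S.IsConflation f g) (t : V ⟶ Y) (ht : t ≫ g = 0) :
    ∃ ψ : V ⟶ X, ψ ≫ f = t := by
  obtain ⟨w, ⟨hk⟩, -⟩ := hS.ker_coker h
  obtain ⟨l, hl⟩ := KernelFork.IsLimit.lift' hk t ht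
  exact ⟨l, by simpa using hl⟩

lemma conf_epi (hS : S.IsExactStructure) {X Y Z V : C} {f : X ⟶ Y} {g : Y ⟶ Z}
    (h : S.IsConflation f g) {a b : Z ⟶ V} (hab : g ≫ a = g ≫ b) : a = b := by
  obtain ⟨w, -, ⟨hc⟩⟩ := hS.ker_coker h
  exact Cofork.IsColimit.hom_ext hc (by simpa using hab)

lemma conf_mono (hS : S.IsExactStructure) {X Y Z V : C} {f : X ⟶ Y} {g : Y ⟶ Z}
    (h : S.IsConflation f g) {a b : V ⟶ X} (hab : a ≫ f = b ≫ f) : a = b := by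
  obtain ⟨w, ⟨hk⟩, -⟩ := hS.ker_coker h
  exact Fork.IsLimit.hom_ext hk (by simpa using hab)

/-- From a section of the deflation, get a retraction of the inflation. -/
lemma retr_of_sect (hS : S.IsExactStructure) {X Y Z : C} {f : X ⟶ Y} {g : Y ⟶ Z}
    (h : S.IsConflation f g) {s : Z ⟶ Y} (hs : s ≫ g = 𝟙 Z) :
    ∃ r : Y ⟶ X, f ≫ r = 𝟙 X ∧ r ≫ f = 𝟙 Y - g ≫ s := by
  obtain ⟨r, hr⟩ := conf_ker_lift hS h (𝟙 Y - g ≫ s)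
    (by simp only [Preadditive.sub_comp, Category.id_comp, Category.assoc, hs,
          Category.comp_id, sub_self])
  refine ⟨r, conf_mono hS h ?_, hr⟩
  rw [Category.assoc, hr]
  simp only [Preadditive.comp_sub, Category.comp_id, Category.id_comp]
  rw [← Category.assoc, conf_comp_zero hS h]
  simp

/-- From a retraction of the inflation, get a section of the deflation. -/
lemma sect_of_retr (hS : S.IsExactStructure) {X Y Z : C} {f : X ⟶ Y} {g : Y ⟶ Z}
    (h : S.IsConflation f g) {r : Y ⟶ X} (hr : f ≫ r = 𝟙 X) :
    ∃ s : Z ⟶ Y, s ≫ g = 𝟙 Z := by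
  obtain ⟨s, hsd⟩ := conf_coker_desc hS h (𝟙 Y - r ≫ f)
    (by rw [Preadditive.comp_sub, Category.comp_id, ← Category.assoc, hr,
          Category.id_comp, sub_self])
  refine ⟨s, conf_epi hS h ?_⟩
  rw [← Category.assoc, hsd]
  simp only [Preadditive.sub_comp, Category.id_comp, Category.assoc,
    conf_comp_zero hS h, Limits.comp_zero, sub_zero, Category.comp_id]

/-- Pushout of a conflation along an arbitrary morphism is a conflation with the
same cokernel. -/
lemma pushout_conf (hS : S.IsExactStructure) {X Y Z A : C} {f : X ⟶ Y} {g : Y ⟶ Z}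
    (h : S.IsConflation f g) (u : X ⟶ A) :
    ∃ (B : C) (f' : A ⟶ B) (k : Y ⟶ B) (g' : B ⟶ Z),
      S.IsConflation f' g' ∧ f ≫ k = u ≫ f' ∧ k ≫ g' = g ∧ IsPushout f u k f' := by
  obtain ⟨B, k, f', hpo, hinf⟩ := hS.pushout_inflation f u ⟨Z, g, h⟩
  obtain ⟨Z₂, g₂, h₂⟩ := hinf
  have hfg : f ≫ g = 0 := conf_comp_zero hS h
  have hf'g₂ : f' ≫ g₂ = 0 := conf_comp_zero hS h₂
  have w0 : f ≫ g = u ≫ (0 : A ⟶ Z) := by simp [hfg]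
  have hk : k ≫ hpo.desc g 0 w0 = g := hpo.inl_desc g 0 w0
  have hf' : f' ≫ hpo.desc g 0 w0 = 0 := hpo.inr_desc g 0 w0
  set g' : B ⟶ Z := hpo.desc g 0 w0 with hg'def
  obtain ⟨ε, hε⟩ := conf_coker_desc hS h₂ g' hf'
  obtain ⟨ε', hε'⟩ := conf_coker_desc hS h (k ≫ g₂)
    (by rw [← Category.assoc, hpo.w, Category.assoc, hf'g₂, Limits.comp_zero])
  have h1 : ε' ≫ ε = 𝟙 Z := by
    apply conf_epi hS h
    rw [← Category.assoc, hε', Category.assoc, hε, hk, Category.comp_id]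
  have hg'ε' : g' ≫ ε' = g₂ := by
    apply hpo.hom_ext
    · rw [← Category.assoc, hk, hε']
    · rw [← Category.assoc, hf', Limits.zero_comp, hf'g₂]
  have h2 : ε ≫ ε' = 𝟙 Z₂ := by
    apply conf_epi hS h₂
    rw [← Category.assoc, hε, hg'ε', Category.comp_id]
  have hc := hS.iso_closed (Iso.refl A) (Iso.refl B) (⟨ε', ε, h1, h2⟩ : Z ≅ Z₂) h₂
  simp only [Iso.refl_hom, Iso.refl_inv, Category.id_comp, Category.comp_id] at hc
  rw [hε] at hc
  exact ⟨B, f', k, g', hc, hpo.w, hk, hpo⟩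

/-- Noether lemma: composable inflations induce a conflation on the cokernels. -/
lemma noether (hS : S.IsExactStructure) {K Q T' T0 T1 W : C} {i : K ⟶ Q} {p : Q ⟶ T'}
    {f : Q ⟶ T0} {g : T0 ⟶ T1} {c : T0 ⟶ W}
    (h1 : S.IsConflation i p) (h2 : S.IsConflation f g) (h3 : S.IsConflation (i ≫ f) c) :
    ∃ (e : T' ⟶ W) (w : W ⟶ T1), S.IsConflation e w ∧ p ≫ e = f ≫ c ∧ c ≫ w = g := by
  obtain ⟨e, he⟩ := conf_coker_desc hS h1 (f ≫ c)
    (by rw [← Category.assoc]; exact conf_comp_zero hS h3)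
  obtain ⟨w, hw⟩ := conf_coker_desc hS h3 g
    (by rw [Category.assoc, conf_comp_zero hS h2, Limits.comp_zero])
  obtain ⟨B, f', k, g', hconfB, hcomm, hfac, hpo⟩ := pushout_conf hS h2 p
  have hkψ : k ≫ hpo.desc c e he.symm = c := hpo.inl_desc c e he.symm
  have hf'ψ : f' ≫ hpo.desc c e he.symm = e := hpo.inr_desc c e he.symm
  set ψ : B ⟶ W := hpo.desc c e he.symm with hψdef
  obtain ⟨ψ', hψ'⟩ := conf_coker_desc hS h3 k
    (by rw [Category.assoc, hcomm, ← Category.assoc, conf_comp_zero hS h1,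
          Limits.zero_comp])
  have heψ' : e ≫ ψ' = f' := by
    apply conf_epi hS h1
    rw [← Category.assoc, he, Category.assoc, hψ']
    exact hcomm
  have hψψ' : ψ ≫ ψ' = 𝟙 B := by
    apply hpo.hom_ext
    · rw [← Category.assoc, hkψ, hψ', Category.comp_id]
    · rw [← Category.assoc, hf'ψ, heψ', Category.comp_id]
  have hψ'ψ : ψ' ≫ ψ = 𝟙 W := by
    apply conf_epi hS h3
    rw [← Category.assoc, hψ', hkψ, Category.comp_id]
  have hc := hS.iso_closed (Iso.refl T') (⟨ψ', ψ, hψ'ψ, hψψ'⟩ : W ≅ B) (Iso.refl T1) hconfB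
  simp only [Iso.refl_hom, Iso.refl_inv, Category.id_comp, Category.comp_id] at hc
  have hwψ : ψ' ≫ g' = w := by
    apply conf_epi hS h3
    rw [← Category.assoc, hψ', hfac, hw]
  rw [hf'ψ, hwψ] at hc
  exact ⟨e, w, hc, he, hw⟩

/-- The middle of a split conflation with ends in an additively closed class lies in
the class. -/
lemma mem_of_split [HasZeroObject C] [HasBinaryBiproducts C]
    (hS : S.IsExactStructure) {T : Set C} (hAdd : AdditivelyClosed T)
    {X W Z : C} {e : X ⟶ W} {w : W ⟶ Z} (h : S.IsConflation e w)
    (hX : X ∈ T) (hZ : Z ∈ T) {s : Z ⟶ W} (hs : s ≫ w = 𝟙 Z) : W ∈ T := by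
  obtain ⟨r, hr, hre⟩ := retr_of_sect hS h hs
  have hsr : s ≫ r = 0 := by
    apply conf_mono hS h
    rw [Category.assoc, hre]
    simp only [Preadditive.comp_sub, Category.comp_id, Limits.zero_comp]
    rw [← Category.assoc, hs]
    simp
  have hew : e ≫ w = 0 := conf_comp_zero hS h
  refine hAdd.mem_of_iso (X := X ⊞ Z) ?_ (hAdd.biprod_mem hX hZ)
  refine ⟨biprod.desc e s, biprod.lift r w, ?_, ?_⟩
  · apply biprod.hom_ext' <;> apply biprod.hom_ext <;>
      simp [hr, hew, hsr, hs]
  · rw [biprod.lift_desc, hre]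
    abel

lemma proj_of_retract {X P : C} (hP : S.IsProjObj P) {σ : X ⟶ P} {ρ : P ⟶ X}
    (hσρ : σ ≫ ρ = 𝟙 X) : S.IsProjObj X := by
  intro Y Z g hg u
  obtain ⟨v, hv⟩ := hP g hg (ρ ≫ u)
  exact ⟨σ ≫ v, by rw [Category.assoc, hv, ← Category.assoc, hσρ, Category.id_comp]⟩

lemma projObj_of_rel {P : C} (h : S.IsProjRel Set.univ P) : S.IsProjObj P := by
  intro Y Z g hg u
  obtain ⟨X, f, hconf⟩ := hg
  exact h.2 g (Set.mem_univ _) (Set.mem_univ _) ⟨X, f, Set.mem_univ _, hconf⟩ u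

/-- A projective object has vanishing `Ext^{n+1}` against everything. -/
lemma extSucc_of_proj (hS : S.IsExactStructure) (n : ℕ) :
    ∀ {X : C}, S.IsProjObj X → ∀ Y : C, S.extSuccZeroRel Set.univ n X Y := by
  induction n with
  | zero =>
      intro X hX Y E f g _ hconf
      exact hX g ⟨Y, f, hconf⟩ (𝟙 X)
  | succ n ih =>
      intro X hX Y K P i p _ hPrel hconf
      obtain ⟨s, hs⟩ := hX p ⟨K, i, hconf⟩ (𝟙 X)
      obtain ⟨r, hr, -⟩ := retr_of_sect hS hconf hs
      exact ih (proj_of_retract (projObj_of_rel hPrel) hr) Y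

/-- Key lemma: under τ-rigidity together with the approximating-conflation
condition on projectives, the syzygy of any object of `T` is projective. -/
lemma syzygy_proj [HasZeroObject C] [HasBinaryBiproducts C]
    (hS : S.IsExactStructure) (hP : S.HasEnoughProjectives)
    {T : Set C} (hAdd : AdditivelyClosed T)
    (hrig : ∀ T' ∈ T, ∀ X ∈ S.Fac T, S.ext1Zero T' X)
    (hA : ∀ P ∈ S.projClass, ∃ (T0 T1 : C) (f : P ⟶ T0) (g : T0 ⟶ T1),
        T0 ∈ T ∧ T1 ∈ T ∧ S.IsConflation f g ∧ LeftApprox T f)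
    {K Q T' : C} {i : K ⟶ Q} {p : Q ⟶ T'} (hQ : S.IsProjObj Q) (hT' : T' ∈ T)
    (hconf : S.IsConflation i p) : S.IsProjObj K := by
  -- the approximation conflation at `Q`
  obtain ⟨T0, T1, f, g, hT0, hT1, hfg, -⟩ := hA Q hQ
  have hjinf : S.IsInflation (i ≫ f) :=
    hS.inflation_comp ⟨_, _, hconf⟩ ⟨_, _, hfg⟩
  obtain ⟨W, c, hjc⟩ := hjinf
  -- Noether: conflation T' ↣ W ↠ T1, which splits by rigidity, so W ∈ T
  obtain ⟨e, w, hew, hpe, hcw⟩ := noether hS hconf hfg hjc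
  have hT'fac : T' ∈ S.Fac T := ⟨T', 𝟙 T', hT', hS.id_deflation T'⟩
  obtain ⟨s1, hs1⟩ := hrig T1 hT1 T' hT'fac W e w hew
  have hW : W ∈ T := mem_of_split hS hAdd hew hT' hT1 hs1
  -- projective cover of K
  obtain ⟨P, d, hPproj, hddefl⟩ := hP K
  obtain ⟨N, k, hkd⟩ := hddefl
  -- the approximation conflation at `P`
  obtain ⟨TP0, TP1, fP, gP, hTP0, hTP1, hfPgP, -⟩ := hA P hPproj
  have hminf : S.IsInflation (k ≫ fP) :=
    hS.inflation_comp ⟨_, _, hkd⟩ ⟨_, _, hfPgP⟩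
  obtain ⟨G, uG, hmu⟩ := hminf
  have hGfac : G ∈ S.Fac T := ⟨TP0, uG, hTP0, ⟨N, k ≫ fP, hmu⟩⟩
  -- the induced map γ : K ⟶ G
  obtain ⟨γ, hγ⟩ := conf_coker_desc hS hkd (fP ≫ uG)
    (by rw [← Category.assoc]; exact conf_comp_zero hS hmu)
  -- extend γ over i ≫ f using rigidity Ext¹(W, G) = 0
  obtain ⟨B, aG, hmap, gB, hconfB, hcommB, hfacB, -⟩ := pushout_conf hS hjc γ
  obtain ⟨sB, hsB⟩ := hrig W hW G hGfac B aG gB hconfB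
  obtain ⟨rG, hrG, -⟩ := retr_of_sect hS hconfB hsB
  have hjgt : (i ≫ f) ≫ (hmap ≫ rG) = γ := by
    rw [← Category.assoc, hcommB, Category.assoc, hrG, Category.comp_id]
  -- lift through the projective Q
  obtain ⟨v, hv⟩ := hQ uG ⟨N, k ≫ fP, hmu⟩ (f ≫ hmap ≫ rG)
  -- the correction map factors through the kernel N and splits the cover
  have hμu : (fP - d ≫ i ≫ v) ≫ uG = 0 := by
    rw [Preadditive.sub_comp]
    simp only [Category.assoc]
    rw [hv, ← Category.assoc i f (hmap ≫ rG), hjgt, hγ, sub_self]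
  obtain ⟨ρ, hρ⟩ := conf_ker_lift hS hmu (fP - d ≫ i ≫ v) hμu
  have hkρ : k ≫ ρ = 𝟙 N := by
    refine conf_mono hS hmu ?_
    rw [Category.id_comp, Category.assoc, hρ, Preadditive.comp_sub,
      ← Category.assoc k d, conf_comp_zero hS hkd, Limits.zero_comp, sub_zero]
  obtain ⟨τ, hτ⟩ := sect_of_retr hS hkd hkρ
  exact proj_of_retract hPproj hτ

end AuxLemmas

end TauTilting

namespace TauTilting

/-- a support τ-tilting subcategory is tilting iff every projective
admits a conflation `P ↣ T⁰ ↠ T¹` with `T⁰, T¹ ∈ T` whose inflation is a left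
`T`-approximation. -/
theorem support_tau_tilting_is_tilting_iff
    {C : Type u} [Category.{v} C] [Preadditive C] [HasZeroObject C] [HasBinaryBiproducts C]
    (S : ConflationStruct C) (hS : S.IsExactStructure) (hP : S.HasEnoughProjectives)
    (T : Set C) (hT : S.IsSupportTauTilting T) :
    S.IsTilting T ↔
      ∀ P ∈ S.projClass, ∃ (T0 T1 : C) (f : P ⟶ T0) (g : T0 ⟶ T1),
        T0 ∈ T ∧ T1 ∈ T ∧ S.IsConflation f g ∧ LeftApprox T f := by
  obtain ⟨⟨hAdd, hrig⟩, -⟩ := hT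
  constructor
  · rintro ⟨-, hOrth, -, hCores⟩ P hPmem
    obtain ⟨T0, T1, f, g, hT0, hT1, hconf⟩ := hCores P hPmem
    refine ⟨T0, T1, f, g, hT0, hT1, hconf, hT0, ?_⟩
    intro T'' hT'' u
    obtain ⟨B, f', k, g', hconf', hcomm, hfac, -⟩ := pushout_conf hS hconf u
    obtain ⟨s, hs⟩ := hOrth T1 hT1 T'' hT'' 0 B f' g' (Set.mem_univ _) hconf'
    obtain ⟨r, hr, -⟩ := retr_of_sect hS hconf' hs
    refine ⟨k ≫ r, ?_⟩
    rw [← Category.assoc, hcomm, Category.assoc, hr, Category.comp_id]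
  · intro hA
    refine ⟨hAdd, ?_, ?_, ?_⟩
    · intro T1 hT1mem T2 hT2mem n
      cases n with
      | zero =>
          intro E f' g' _ hconf'
          exact hrig T1 hT1mem T2 ⟨T2, 𝟙 T2, hT2mem, hS.id_deflation T2⟩ E f' g' hconf'
      | succ n =>
          intro K P i p _ hPrel hconf'
          have hK := syzygy_proj hS hP hAdd hrig hA (projObj_of_rel hPrel) hT1mem hconf'
          exact extSucc_of_proj hS n hK T2
    · intro T' hT'mem Y K P i p _ hPrel hconf'
      have hK := syzygy_proj hS hP hAdd hrig hA (projObj_of_rel hPrel) hT'mem hconf'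
      exact extSucc_of_proj hS 0 hK Y
    · intro P hPmem
      obtain ⟨T0, T1, f, g, hT0, hT1, hconf, -⟩ := hA P hPmem
      exact ⟨T0, T1, f, g, hT0, hT1, hconf⟩

end TauTilting
end

section
/- Let E be a weakly idempotent complete exact category with enough projectives P and let T be a support τ-tilting subcategory of E. Then Fac T is closed under extensions in E (hence is a full exact subcategory), and the exact category Fac T has enough projectives given by T: every object of T is a projective object of the exact category Fac T, and every X ∈ Fac T admits a conflation Y ↣ Z ↠ X with Y ∈ Fac T and Z ∈ T. -/
open CategoryTheory CategoryTheory.Limits ZeroObject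

namespace TauTilting

namespace ConflationStruct

section ExactLemmas

variable {C : Type u} [Category.{v} C] [Preadditive C] {S : ConflationStruct C}

section Basic

lemma conf_w (hS : S.IsExactStructure) {X Y Z : C} {f : X ⟶ Y} {g : Y ⟶ Z}
    (h : S.IsConflation f g) : f ≫ g = 0 :=
  (hS.ker_coker h).choose

lemma conf_ker (hS : S.IsExactStructure) {X Y Z : C} {f : X ⟶ Y} {g : Y ⟶ Z}
    (h : S.IsConflation f g) (w : f ≫ g = 0) :
    Nonempty (IsLimit (KernelFork.ofι f w)) := by
  obtain ⟨w', ⟨hl⟩, -⟩ := hS.ker_coker h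
  exact ⟨hl⟩

lemma conf_coker (hS : S.IsExactStructure) {X Y Z : C} {f : X ⟶ Y} {g : Y ⟶ Z}
    (h : S.IsConflation f g) (w : f ≫ g = 0) :
    Nonempty (IsColimit (CokernelCofork.ofπ g w)) := by
  obtain ⟨w', -, ⟨hc⟩⟩ := hS.ker_coker h
  exact ⟨hc⟩

lemma conf_mono (hS : S.IsExactStructure) {X Y Z : C} {f : X ⟶ Y} {g : Y ⟶ Z}
    (h : S.IsConflation f g) : Mono f := by
  obtain ⟨hl⟩ := conf_ker hS h (conf_w hS h)
  exact ⟨fun {A} a b hab => Fork.IsLimit.hom_ext hl (by simpa using hab)⟩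

lemma conf_epi (hS : S.IsExactStructure) {X Y Z : C} {f : X ⟶ Y} {g : Y ⟶ Z}
    (h : S.IsConflation f g) : Epi g := by
  obtain ⟨hc⟩ := conf_coker hS h (conf_w hS h)
  exact ⟨fun {A} a b hab => Cofork.IsColimit.hom_ext hc (by simpa using hab)⟩

lemma defl_epi (hS : S.IsExactStructure) {Y Z : C} {g : Y ⟶ Z}
    (h : S.IsDeflation g) : Epi g := by
  obtain ⟨X, f, h⟩ := h; exact conf_epi hS h

lemma infl_mono (hS : S.IsExactStructure) {X Y : C} {f : X ⟶ Y}
    (h : S.IsInflation f) : Mono f := by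
  obtain ⟨Z, g, h⟩ := h; exact conf_mono hS h

/-- Factor a morphism killed by the deflation through the kernel. -/
lemma conf_lift (hS : S.IsExactStructure) {X Y Z : C} {f : X ⟶ Y} {g : Y ⟶ Z}
    (h : S.IsConflation f g) {A : C} (t : A ⟶ Y) (ht : t ≫ g = 0) :
    ∃ ρ : A ⟶ X, ρ ≫ f = t := by
  obtain ⟨hl⟩ := conf_ker hS h (conf_w hS h)
  obtain ⟨ρ, hρ⟩ := KernelFork.IsLimit.lift' hl t ht
  exact ⟨ρ, hρ⟩

/-- Factor a morphism killing the inflation through the cokernel. -/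
lemma conf_desc (hS : S.IsExactStructure) {X Y Z : C} {f : X ⟶ Y} {g : Y ⟶ Z}
    (h : S.IsConflation f g) {A : C} (t : Y ⟶ A) (ht : f ≫ t = 0) :
    ∃ δ : Z ⟶ A, g ≫ δ = t := by
  obtain ⟨hc⟩ := conf_coker hS h (conf_w hS h)
  obtain ⟨δ, hδ⟩ := CokernelCofork.IsColimit.desc' hc t ht
  exact ⟨δ, hδ⟩

/-- Replace the kernel part of a conflation by any other kernel of the deflation. -/
lemma conf_of_kernel (hS : S.IsExactStructure) {X₀ X Y Z : C} {f₀ : X₀ ⟶ Y} {g : Y ⟶ Z}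
    (h : S.IsConflation f₀ g) {x : X ⟶ Y} (hx : x ≫ g = 0)
    (hl : IsLimit (KernelFork.ofι x hx)) : S.IsConflation x g := by
  obtain ⟨hl₀⟩ := conf_ker hS h (conf_w hS h)
  let e := IsLimit.conePointUniqueUpToIso hl₀ hl
  have hcomm : e.hom ≫ x = f₀ := by
    simpa using IsLimit.conePointUniqueUpToIso_hom_comp hl₀ hl WalkingParallelPair.zero
  have h2 := hS.iso_closed e.symm (Iso.refl Y) (Iso.refl Z) h
  simp only [Iso.refl_hom, Iso.refl_inv, Category.comp_id, Category.id_comp,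
    Iso.symm_hom] at h2
  have h3 : e.inv ≫ f₀ = x := by rw [Iso.inv_comp_eq]; exact hcomm.symm
  rwa [h3] at h2

/-- Replace the cokernel part of a conflation by any other cokernel of the inflation. -/
lemma conf_of_cokernel (hS : S.IsExactStructure) {X Y Z₀ Z : C} {f : X ⟶ Y} {g₀ : Y ⟶ Z₀}
    (h : S.IsConflation f g₀) {y : Y ⟶ Z} (hy : f ≫ y = 0)
    (hc : IsColimit (CokernelCofork.ofπ y hy)) : S.IsConflation f y := by
  obtain ⟨hc₀⟩ := conf_coker hS h (conf_w hS h)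
  let e := IsColimit.coconePointUniqueUpToIso hc₀ hc
  have hcomm : g₀ ≫ e.hom = y := by
    simpa using IsColimit.comp_coconePointUniqueUpToIso_hom hc₀ hc WalkingParallelPair.one
  have h2 := hS.iso_closed (Iso.refl X) (Iso.refl Y) e.symm h
  simp only [Iso.refl_hom, Iso.refl_inv, Category.comp_id, Category.id_comp,
    Iso.symm_inv] at h2
  rwa [hcomm] at h2

lemma defl_of_isIso (hS : S.IsExactStructure) {X Y : C} (φ : X ⟶ Y) [IsIso φ] :
    S.IsDeflation φ := by
  obtain ⟨X₀, f₀, h⟩ := hS.id_deflation X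
  have h2 := hS.iso_closed (Iso.refl X₀) (Iso.refl X) (asIso φ).symm h
  simp only [Iso.refl_hom, Iso.refl_inv, Category.comp_id, Category.id_comp,
    Iso.symm_inv, asIso_hom] at h2
  exact ⟨_, _, h2⟩

lemma infl_of_isIso (hS : S.IsExactStructure) {X Y : C} (φ : X ⟶ Y) [IsIso φ] :
    S.IsInflation φ := by
  obtain ⟨Z₀, g₀, h⟩ := hS.id_inflation Y
  have h2 := hS.iso_closed (asIso φ) (Iso.refl Y) (Iso.refl Z₀) h
  simp only [Iso.refl_hom, Iso.refl_inv, Category.comp_id, Category.id_comp,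
    asIso_hom] at h2
  exact ⟨_, _, h2⟩

end Basic

end ExactLemmas

end ConflationStruct

end TauTilting
namespace TauTilting

namespace ConflationStruct

section ExactLemmas2

variable {C : Type u} [Category.{v} C] [Preadditive C] {S : ConflationStruct C}
variable [HasZeroObject C] [HasBinaryBiproducts C]

set_option linter.unusedSectionVars false

lemma infl_zero (hS : S.IsExactStructure) (Y : C) : S.IsInflation (0 : (0 : C) ⟶ Y) := by
  obtain ⟨X₀, f₀, h⟩ := hS.id_deflation Y
  obtain ⟨w, ⟨hl⟩, -⟩ := hS.ker_coker h
  have hf₀ : f₀ = 0 := by simpa using w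
  have hz : IsZero X₀ := by
    rw [IsZero.iff_id_eq_zero]
    exact Fork.IsLimit.hom_ext hl (by simp [hf₀])
  have h2 := hS.iso_closed hz.isoZero.symm (Iso.refl Y) (Iso.refl Y) h
  have h3 : hz.isoZero.symm.hom ≫ f₀ ≫ (Iso.refl Y).inv = (0 : (0 : C) ⟶ Y) := by
    simp [hf₀]
  rw [h3] at h2
  exact ⟨_, _, h2⟩

/-- The split sequence `Y ↣ X ⊞ Y ↠ X` is a conflation. -/
lemma conf_inr_fst (hS : S.IsExactStructure) (X Y : C) :
    S.IsConflation (biprod.inr : Y ⟶ X ⊞ Y) (biprod.fst : X ⊞ Y ⟶ X) := by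
  obtain ⟨W, h', f', po, hf'⟩ :=
    hS.pushout_inflation (0 : (0 : C) ⟶ X) (0 : (0 : C) ⟶ Y) (infl_zero hS X)
  -- identify `W` with the biproduct
  let φ : W ⟶ X ⊞ Y := po.desc biprod.inl biprod.inr (by simp)
  let ψ : (X ⊞ Y : C) ⟶ W := biprod.desc h' f'
  have hφψ : φ ≫ ψ = 𝟙 W := by
    apply po.hom_ext
    · rw [← Category.assoc, po.inl_desc]; simp [ψ]
    · rw [← Category.assoc, po.inr_desc]; simp [ψ]
  have hψφ : ψ ≫ φ = 𝟙 _ := by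
    apply biprod.hom_ext' <;> rw [← Category.assoc] <;> simp [ψ, φ, po.inl_desc, po.inr_desc]
  obtain ⟨Z₁, g₁, hc⟩ := hf'
  have h2 := hS.iso_closed (Iso.refl Y) (Iso.mk ψ φ hψφ hφψ) (Iso.refl Z₁) hc
  simp only [Iso.refl_hom, Iso.refl_inv, Category.comp_id, Category.id_comp] at h2
  have h3 : f' ≫ φ = biprod.inr := po.inr_desc _ _ _
  rw [h3] at h2
  -- now replace the cokernel `ψ ≫ g₁` by `biprod.fst`
  haveI : Epi (biprod.fst : X ⊞ Y ⟶ X) := SplitEpi.epi ⟨biprod.inl, biprod.inl_fst⟩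
  refine conf_of_cokernel hS h2 (by simp)
    (CokernelCofork.IsColimit.ofπ' _ _ fun {A} k hk => ⟨biprod.inl ≫ k, ?_⟩)
  apply biprod.hom_ext' <;> simp only [← Category.assoc] <;> simp [hk]

/-- The split sequence `X ↣ X ⊞ Y ↠ Y` is a conflation. -/
lemma conf_inl_snd (hS : S.IsExactStructure) (X Y : C) :
    S.IsConflation (biprod.inl : X ⟶ X ⊞ Y) (biprod.snd : X ⊞ Y ⟶ Y) := by
  obtain ⟨W, h', f', po, hf'⟩ :=
    hS.pushout_inflation (0 : (0 : C) ⟶ Y) (0 : (0 : C) ⟶ X) (infl_zero hS Y)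
  let φ : W ⟶ X ⊞ Y := po.desc biprod.inr biprod.inl (by simp)
  let ψ : (X ⊞ Y : C) ⟶ W := biprod.desc f' h'
  have hφψ : φ ≫ ψ = 𝟙 W := by
    apply po.hom_ext
    · rw [← Category.assoc, po.inl_desc]; simp [ψ]
    · rw [← Category.assoc, po.inr_desc]; simp [ψ]
  have hψφ : ψ ≫ φ = 𝟙 _ := by
    apply biprod.hom_ext' <;> rw [← Category.assoc] <;> simp [ψ, φ, po.inl_desc, po.inr_desc]
  obtain ⟨Z₁, g₁, hc⟩ := hf'
  have h2 := hS.iso_closed (Iso.refl X) (Iso.mk ψ φ hψφ hφψ) (Iso.refl Z₁) hc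
  simp only [Iso.refl_hom, Iso.refl_inv, Category.comp_id, Category.id_comp] at h2
  have h3 : f' ≫ φ = biprod.inl := po.inr_desc _ _ _
  rw [h3] at h2
  haveI : Epi (biprod.snd : X ⊞ Y ⟶ Y) := SplitEpi.epi ⟨biprod.inr, biprod.inr_snd⟩
  refine conf_of_cokernel hS h2 (by simp)
    (CokernelCofork.IsColimit.ofπ' _ _ fun {A} k hk => ⟨biprod.inr ≫ k, ?_⟩)
  apply biprod.hom_ext' <;> simp only [← Category.assoc] <;> simp [hk]

lemma defl_fst (hS : S.IsExactStructure) (X Y : C) :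
    S.IsDeflation (biprod.fst : X ⊞ Y ⟶ X) := ⟨_, _, conf_inr_fst hS X Y⟩

lemma defl_snd (hS : S.IsExactStructure) (X Y : C) :
    S.IsDeflation (biprod.snd : X ⊞ Y ⟶ Y) := ⟨_, _, conf_inl_snd hS X Y⟩

lemma infl_inl (hS : S.IsExactStructure) (X Y : C) :
    S.IsInflation (biprod.inl : X ⟶ X ⊞ Y) := ⟨_, _, conf_inl_snd hS X Y⟩

lemma infl_inr (hS : S.IsExactStructure) (X Y : C) :
    S.IsInflation (biprod.inr : Y ⟶ X ⊞ Y) := ⟨_, _, conf_inr_fst hS X Y⟩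

/-- `f ⊞ 𝟙` is a deflation when `f` is. -/
lemma defl_map_left (hS : S.IsExactStructure) {A A' : C} {f : A ⟶ A'} (hf : S.IsDeflation f)
    (K : C) : S.IsDeflation (biprod.map f (𝟙 K)) := by
  obtain ⟨P, h', g', pb, hg'⟩ := hS.pullback_deflation f (biprod.fst : A' ⊞ K ⟶ A') hf
  let j₁ : (A ⊞ K : C) ⟶ P := pb.lift biprod.fst (biprod.map f (𝟙 K)) (by simp)
  let j₂ : P ⟶ (A ⊞ K : C) := biprod.lift h' (g' ≫ biprod.snd)
  have h₁ : j₁ ≫ h' = biprod.fst := pb.lift_fst _ _ _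
  have h₂ : j₁ ≫ g' = biprod.map f (𝟙 K) := pb.lift_snd _ _ _
  have e₁ : j₂ ≫ j₁ = 𝟙 P := by
    apply pb.hom_ext
    · rw [Category.assoc, h₁]; simp [j₂]
    · rw [Category.assoc, h₂]
      apply biprod.hom_ext
      · simp [j₂, pb.w]
      · simp [j₂]
  have e₂ : j₁ ≫ j₂ = 𝟙 _ := by
    apply biprod.hom_ext
    · simp [j₂, h₁]
    · rw [Category.assoc, show j₂ ≫ biprod.snd = g' ≫ biprod.snd from by simp [j₂],
        ← Category.assoc, h₂]
      simp
  haveI : IsIso j₁ := ⟨j₂, e₂, e₁⟩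
  rw [← h₂]
  exact hS.deflation_comp (defl_of_isIso hS j₁) hg'

/-- `𝟙 ⊞ g` is a deflation when `g` is. -/
lemma defl_map_right (hS : S.IsExactStructure) {Y Z : C} {g : Y ⟶ Z} (hg : S.IsDeflation g)
    (W : C) : S.IsDeflation (biprod.map (𝟙 W) g) := by
  obtain ⟨P, h', g', pb, hg'⟩ := hS.pullback_deflation g (biprod.snd : W ⊞ Z ⟶ Z) hg
  let j₁ : (W ⊞ Y : C) ⟶ P := pb.lift biprod.snd (biprod.map (𝟙 W) g) (by simp)
  let j₂ : P ⟶ (W ⊞ Y : C) := biprod.lift (g' ≫ biprod.fst) h'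
  have h₁ : j₁ ≫ h' = biprod.snd := pb.lift_fst _ _ _
  have h₂ : j₁ ≫ g' = biprod.map (𝟙 W) g := pb.lift_snd _ _ _
  have e₁ : j₂ ≫ j₁ = 𝟙 P := by
    apply pb.hom_ext
    · rw [Category.assoc, h₁]; simp [j₂]
    · rw [Category.assoc, h₂]
      apply biprod.hom_ext
      · simp [j₂]
      · simp [j₂, pb.w]
  have e₂ : j₁ ≫ j₂ = 𝟙 _ := by
    apply biprod.hom_ext
    · rw [Category.assoc, show j₂ ≫ biprod.fst = g' ≫ biprod.fst from by simp [j₂],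
        ← Category.assoc, h₂]
      simp
    · simp [j₂, h₁]
  haveI : IsIso j₁ := ⟨j₂, e₂, e₁⟩
  rw [← h₂]
  exact hS.deflation_comp (defl_of_isIso hS j₁) hg'

/-- `n ⊞ 𝟙` is an inflation when `n` is. -/
lemma infl_map_left (hS : S.IsExactStructure) {N A : C} {n : N ⟶ A} (hn : S.IsInflation n)
    (K : C) : S.IsInflation (biprod.map n (𝟙 K)) := by
  obtain ⟨V, h', f', po, hf'⟩ := hS.pushout_inflation n (biprod.inl : N ⟶ N ⊞ K) hn
  let j₁ : V ⟶ (A ⊞ K : C) := po.desc biprod.inl (biprod.map n (𝟙 K)) (by simp)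
  let j₂ : (A ⊞ K : C) ⟶ V := biprod.desc h' (biprod.inr ≫ f')
  have h₁ : h' ≫ j₁ = biprod.inl := po.inl_desc _ _ _
  have h₂ : f' ≫ j₁ = biprod.map n (𝟙 K) := po.inr_desc _ _ _
  have e₁ : j₁ ≫ j₂ = 𝟙 V := by
    apply po.hom_ext
    · rw [← Category.assoc, h₁]; simp [j₂]
    · rw [← Category.assoc, h₂]
      apply biprod.hom_ext'
      · rw [← Category.assoc, biprod.inl_map, Category.assoc]
        simp [j₂, po.w]
      · simp [j₂]
  have e₂ : j₂ ≫ j₁ = 𝟙 _ := by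
    apply biprod.hom_ext'
    · simp [j₂, h₁]
    · rw [← Category.assoc, show biprod.inr ≫ j₂ = biprod.inr ≫ f' from by simp [j₂],
        Category.assoc, h₂]
      simp
  haveI : IsIso j₁ := ⟨j₂, e₁, e₂⟩
  rw [← h₂]
  exact hS.inflation_comp hf' (infl_of_isIso hS j₁)

end ExactLemmas2

end ConflationStruct

end TauTilting
namespace TauTilting

namespace ConflationStruct

section ExactLemmas3

variable {C : Type u} [Category.{v} C] [Preadditive C] {S : ConflationStruct C}

set_option linter.unusedSectionVars false

/-- Pulling back a conflation along any morphism yields a conflation with the same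
kernel. If the morphism is itself a deflation, the parallel projection is one too. -/
lemma conf_pullback (hS : S.IsExactStructure) {X Y Z U : C} {f : X ⟶ Y} {g : Y ⟶ Z}
    (h : S.IsConflation f g) (u : U ⟶ Z) :
    ∃ (W : C) (w : W ⟶ Y) (g' : W ⟶ U) (x : X ⟶ W),
      S.IsConflation x g' ∧ x ≫ w = f ∧ w ≫ g = g' ≫ u ∧
      (S.IsDeflation u → S.IsDeflation w) := by
  obtain ⟨W, w, g', pb, hg'⟩ := hS.pullback_deflation g u ⟨X, f, h⟩
  have hw : w ≫ g = g' ≫ u := pb.w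
  have hfg : f ≫ g = 0 := conf_w hS h
  let x : X ⟶ W := pb.lift f 0 (by simp [hfg])
  have hxw : x ≫ w = f := pb.lift_fst _ _ _
  have hxg' : x ≫ g' = 0 := pb.lift_snd _ _ _
  haveI : Mono x := by
    haveI : Mono (x ≫ w) := by rw [hxw]; exact conf_mono hS h
    exact mono_of_mono x w
  have hker : IsLimit (KernelFork.ofι x hxg') := by
    refine KernelFork.IsLimit.ofι' x hxg' fun {A} t ht => ?_
    have htw : (t ≫ w) ≫ g = 0 := by rw [Category.assoc, hw, ← Category.assoc, ht, zero_comp]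
    have hex : ∃ ρ : A ⟶ X, ρ ≫ x = t := by
      obtain ⟨ρ, hρ⟩ := conf_lift hS h (t ≫ w) htw
      refine ⟨ρ, pb.hom_ext ?_ ?_⟩
      · rw [Category.assoc, hxw]; exact hρ
      · rw [Category.assoc, hxg', comp_zero, ht]
    exact ⟨hex.choose, hex.choose_spec⟩
  obtain ⟨X₀, x₀, hc₀⟩ := hg'
  refine ⟨W, w, g', x, conf_of_kernel hS hc₀ hxg' hker, hxw, hw, fun hu => ?_⟩
  obtain ⟨W₂, h₂, g₂, pb₂, hg₂⟩ := hS.pullback_deflation u g hu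
  let j₁ : W ⟶ W₂ := pb₂.lift g' w hw.symm
  let j₂ : W₂ ⟶ W := pb.lift g₂ h₂ pb₂.w.symm
  have e₁ : j₂ ≫ j₁ = 𝟙 W₂ := by
    apply pb₂.hom_ext
    · rw [Category.assoc, pb₂.lift_fst]; simp [j₂]
    · rw [Category.assoc, pb₂.lift_snd]; simp [j₂]
  have e₂ : j₁ ≫ j₂ = 𝟙 W := by
    apply pb.hom_ext
    · rw [Category.assoc, pb.lift_fst]; simp [j₁]
    · rw [Category.assoc, pb.lift_snd]; simp [j₁]
  haveI : IsIso j₁ := ⟨j₂, e₂, e₁⟩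
  have : j₁ ≫ g₂ = w := pb₂.lift_snd _ _ _
  rw [← this]
  exact hS.deflation_comp (defl_of_isIso hS j₁) hg₂

/-- Noether-type lemma: pushing a conflation `X ↣ Y ↠ Z` forward along the
deflation `t : X ↠ X'` (with kernel `l`) yields a conflation `X' ↣ W ↠ Z`,
where `Y ↠ W` is a given cokernel of `l ≫ x`. -/
lemma conf_noether (hS : S.IsExactStructure) {L X X' Y Z W : C} {l : L ⟶ X} {t : X ⟶ X'}
    {x : X ⟶ Y} {y : Y ⟶ Z} {π : Y ⟶ W} (hlt : S.IsConflation l t) (hxy : S.IsConflation x y)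
    (hπ : S.IsConflation (l ≫ x) π) :
    ∃ (x' : X' ⟶ W) (y' : W ⟶ Z), S.IsConflation x' y' ∧ t ≫ x' = x ≫ π ∧ π ≫ y' = y := by
  haveI hepit : Epi t := conf_epi hS hlt
  haveI hepiπ : Epi π := conf_epi hS hπ
  have hlx : l ≫ x ≫ π = 0 := by rw [← Category.assoc]; exact conf_w hS hπ
  obtain ⟨x', hx'⟩ := conf_desc hS hlt (x ≫ π) hlx
  have hly : (l ≫ x) ≫ y = 0 := by rw [Category.assoc, conf_w hS hxy, comp_zero]
  obtain ⟨y', hy'⟩ := conf_desc hS hπ y hly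
  -- `(x, t; π, x')` is a pushout; compare with the pushout provided by the axioms
  obtain ⟨V, jY, jX', po, hjinfl⟩ := hS.pushout_inflation x t ⟨_, _, hxy⟩
  -- map from the axiom pushout to `W`
  let θ : V ⟶ W := po.desc π x' hx'.symm
  have hθ₁ : jY ≫ θ = π := po.inl_desc _ _ _
  have hθ₂ : jX' ≫ θ = x' := po.inr_desc _ _ _
  have hljY : (l ≫ x) ≫ jY = 0 := by
    rw [Category.assoc, po.w, ← Category.assoc, conf_w hS hlt, zero_comp]
  obtain ⟨θ', hθ'⟩ := conf_desc hS hπ jY hljY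
  have hθ'₂ : x' ≫ θ' = jX' := by
    rw [← cancel_epi t, ← Category.assoc, hx', Category.assoc, hθ', po.w]
  have eθ : θ' ≫ θ = 𝟙 W := by
    rw [← cancel_epi π, ← Category.assoc, hθ', hθ₁, Category.comp_id]
  have eθ' : θ ≫ θ' = 𝟙 V := by
    apply po.hom_ext
    · rw [← Category.assoc, hθ₁, hθ', Category.comp_id]
    · rw [← Category.assoc, hθ₂, hθ'₂, Category.comp_id]
  haveI : IsIso θ := ⟨θ', eθ', eθ⟩
  have hx'infl : S.IsInflation x' := by
    rw [← hθ₂]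
    exact hS.inflation_comp hjinfl (infl_of_isIso hS θ)
  obtain ⟨Z₀, y₀, hc₀⟩ := hx'infl
  -- `y'` is a cokernel of `x'`
  have hx'y' : x' ≫ y' = 0 := by
    rw [← cancel_epi t, ← Category.assoc, hx', Category.assoc, hy', conf_w hS hxy, comp_zero]
  haveI : Epi y' := by
    have : Epi (π ≫ y') := by rw [hy']; exact conf_epi hS hxy
    exact epi_of_epi π y'
  have hcoker : IsColimit (CokernelCofork.ofπ y' hx'y') := by
    refine CokernelCofork.IsColimit.ofπ' y' hx'y' fun {A} s hs => ?_
    have hex : ∃ σ : Z ⟶ A, y' ≫ σ = s := by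
      have hxs : x ≫ π ≫ s = 0 := by
        rw [← Category.assoc, ← hx', Category.assoc, hs, comp_zero]
      obtain ⟨σ, hσ⟩ := conf_desc hS hxy (π ≫ s) hxs
      refine ⟨σ, ?_⟩
      rw [← cancel_epi π, ← Category.assoc, hy', hσ]
    exact ⟨hex.choose, hex.choose_spec⟩
  exact ⟨x', y', conf_of_cokernel hS hc₀ hx'y' hcoker, hx', hy'⟩

variable [HasZeroObject C] [HasBinaryBiproducts C]

/-- Quillen's "obscure axiom": if `p` has a kernel and `f ≫ p` is a deflation
for some `f`, then `p` is a deflation. -/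
lemma defl_of_comp_defl_of_kernel (hS : S.IsExactStructure) {A B C₀ K : C} {f : A ⟶ B}
    {p : B ⟶ C₀} {k : K ⟶ B} (hk0 : k ≫ p = 0) (hklim : IsLimit (KernelFork.ofι k hk0))
    (hq : S.IsDeflation (f ≫ p)) : S.IsDeflation p := by
  haveI hkmono : Mono k := ⟨fun {E} a b hab => Fork.IsLimit.hom_ext hklim (by simpa using hab)⟩
  obtain ⟨N, n, hnconf⟩ := hq
  -- pull the deflation `f ≫ p` back along `p`
  obtain ⟨D, h', g', pb, hg'⟩ := hS.pullback_deflation (f ≫ p) p ⟨N, n, hnconf⟩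
  let u : A ⟶ D := pb.lift (𝟙 A) f (by simp)
  have hu₁ : u ≫ h' = 𝟙 A := pb.lift_fst _ _ _
  have hu₂ : u ≫ g' = f := pb.lift_snd _ _ _
  let k' : K ⟶ D := pb.lift 0 k (by simp [hk0])
  have hk'₁ : k' ≫ h' = 0 := pb.lift_fst _ _ _
  have hk'₂ : k' ≫ g' = k := pb.lift_snd _ _ _
  haveI : Mono k' := by
    haveI : Mono (k' ≫ g') := by rw [hk'₂]; exact hkmono
    exact mono_of_mono k' g'
  -- `k'` is a kernel of `h'`, giving a splitting `D ≅ A ⊞ K`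
  have hid : (𝟙 D - h' ≫ u) ≫ h' = 0 := by
    rw [Preadditive.sub_comp, Category.id_comp, Category.assoc, hu₁, Category.comp_id, sub_self]
  have hlift : ∀ {E : C} (s : E ⟶ D), s ≫ h' = 0 → ∃ ρ : E ⟶ K, ρ ≫ k' = s := by
    intro E s hs
    have hsp : (s ≫ g') ≫ p = 0 := by
      rw [Category.assoc, ← pb.w, ← Category.assoc, hs, zero_comp]
    obtain ⟨ρ, hρ₀⟩ := KernelFork.IsLimit.lift' hklim (s ≫ g') hsp
    have hρ : ρ ≫ k = s ≫ g' := hρ₀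
    refine ⟨ρ, pb.hom_ext ?_ ?_⟩
    · rw [Category.assoc, hk'₁, comp_zero, hs]
    · rw [Category.assoc, hk'₂]; exact hρ
  obtain ⟨rr, hrr⟩ := hlift (𝟙 D - h' ≫ u) hid
  have hurr : u ≫ rr = 0 := by
    rw [← cancel_mono k', Category.assoc, hrr, zero_comp,
      Preadditive.comp_sub, Category.comp_id, ← Category.assoc, hu₁, Category.id_comp, sub_self]
  have hkrr : k' ≫ rr = 𝟙 K := by
    rw [← cancel_mono k', Category.assoc, hrr, Category.id_comp,
      Preadditive.comp_sub, Category.comp_id, ← Category.assoc, hk'₁, zero_comp, sub_zero]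
  let φ : (A ⊞ K : C) ⟶ D := biprod.desc u k'
  let φ' : D ⟶ (A ⊞ K : C) := biprod.lift h' rr
  have hφφ' : φ ≫ φ' = 𝟙 _ := by
    apply biprod.hom_ext'
    · rw [← Category.assoc, show biprod.inl ≫ φ = u from biprod.inl_desc _ _]
      apply biprod.hom_ext
      · rw [Category.assoc, show φ' ≫ biprod.fst = h' from biprod.lift_fst _ _, hu₁]; simp
      · rw [Category.assoc, show φ' ≫ biprod.snd = rr from biprod.lift_snd _ _, hurr]; simp
    · rw [← Category.assoc, show biprod.inr ≫ φ = k' from biprod.inr_desc _ _]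
      apply biprod.hom_ext
      · rw [Category.assoc, show φ' ≫ biprod.fst = h' from biprod.lift_fst _ _, hk'₁]; simp
      · rw [Category.assoc, show φ' ≫ biprod.snd = rr from biprod.lift_snd _ _, hkrr]; simp
  have hφ'φ : φ' ≫ φ = 𝟙 D := by
    rw [show φ' ≫ φ = h' ≫ u + rr ≫ k' from biprod.lift_desc, hrr]
    abel
  haveI : IsIso φ := ⟨φ', hφφ', hφ'φ⟩
  -- the deflation `e₀ = desc (f, k) : A ⊞ K ↠ B`
  have he₀eq : φ ≫ g' = biprod.desc f k := by
    apply biprod.hom_ext'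
    · simp [φ, hu₂]
    · simp [φ, hk'₂]
  have he₀ : S.IsDeflation (biprod.desc f k) := by
    rw [← he₀eq]; exact hS.deflation_comp (defl_of_isIso hS φ) hg'
  -- `ζ : N → K` with `ζ ≫ k = n ≫ f`
  have hnf : (n ≫ f) ≫ p = 0 := by rw [Category.assoc]; exact conf_w hS hnconf
  obtain ⟨ζ, hζ⟩ : ∃ ζ : N ⟶ K, ζ ≫ k = n ≫ f := by
    obtain ⟨ζ₀, hζ₀⟩ := KernelFork.IsLimit.lift' hklim (n ≫ f) hnf
    exact ⟨ζ₀, hζ₀⟩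
  -- `w₂ = lift (n, -ζ)` is a kernel of `e₀`
  have hw₂0 : biprod.lift n (-ζ) ≫ biprod.desc f k = 0 := by
    rw [biprod.lift_desc, Preadditive.neg_comp, hζ, add_neg_cancel]
  haveI : Mono (biprod.lift n (-ζ)) := by
    haveI hmn : Mono n := conf_mono hS hnconf
    haveI : Mono (biprod.lift n (-ζ) ≫ biprod.fst) := by rw [biprod.lift_fst]; exact hmn
    exact mono_of_mono (biprod.lift n (-ζ)) biprod.fst
  have hw₂ker : IsLimit (KernelFork.ofι (biprod.lift n (-ζ)) hw₂0) := by
    refine KernelFork.IsLimit.ofι' _ _ fun {E} s hs => ?_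
    suffices hex : ∃ τ : E ⟶ N, τ ≫ biprod.lift n (-ζ) = s from ⟨hex.choose, hex.choose_spec⟩
    have h1 : s ≫ biprod.fst ≫ f + s ≫ biprod.snd ≫ k = 0 := by
      have := hs
      rw [show biprod.desc f k = biprod.fst ≫ f + biprod.snd ≫ k from by
        apply biprod.hom_ext' <;> simp, Preadditive.comp_add] at this
      simpa [Category.assoc] using this
    have h2 : (s ≫ biprod.fst) ≫ f ≫ p = 0 := by
      have e : s ≫ biprod.fst ≫ f = -(s ≫ biprod.snd ≫ k) := eq_neg_of_add_eq_zero_left h1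
      calc (s ≫ biprod.fst) ≫ f ≫ p = (s ≫ biprod.fst ≫ f) ≫ p := by simp [Category.assoc]
        _ = (-(s ≫ biprod.snd ≫ k)) ≫ p := by rw [e]
        _ = 0 := by
            simp only [Preadditive.neg_comp, neg_eq_zero, Category.assoc, hk0, comp_zero]
    obtain ⟨τ, hτ⟩ := conf_lift hS hnconf (s ≫ biprod.fst) h2
    have hτζ : τ ≫ ζ = -(s ≫ biprod.snd) := by
      rw [← cancel_mono k, Category.assoc, hζ, ← Category.assoc, hτ, Preadditive.neg_comp]
      have e : s ≫ biprod.fst ≫ f = -(s ≫ biprod.snd ≫ k) := eq_neg_of_add_eq_zero_left h1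
      simpa [Category.assoc] using e
    refine ⟨τ, ?_⟩
    apply biprod.hom_ext
    · rw [Category.assoc, biprod.lift_fst]; exact hτ
    · rw [Category.assoc, biprod.lift_snd, Preadditive.comp_neg, hτζ, neg_neg]
  obtain ⟨M₀, w₀, hw₀⟩ := he₀
  have hw₂conf : S.IsConflation (biprod.lift n (-ζ)) (biprod.desc f k) :=
    conf_of_kernel hS hw₀ hw₂0 hw₂ker
  -- the conflation `N ⊞ K ↣ A ⊞ K ↠ C₀`
  have hνinfl : S.IsInflation (biprod.map n (𝟙 K)) := infl_map_left hS ⟨_, _, hnconf⟩ K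
  have hν0 : biprod.map n (𝟙 K) ≫ biprod.fst ≫ (f ≫ p) = 0 := by
    rw [← Category.assoc, biprod.map_fst, Category.assoc, conf_w hS hnconf, comp_zero]
  haveI : Epi (biprod.fst ≫ (f ≫ p) : (A ⊞ K : C) ⟶ C₀) := by
    haveI : Epi (biprod.fst : (A ⊞ K : C) ⟶ A) := SplitEpi.epi ⟨biprod.inl, biprod.inl_fst⟩
    haveI : Epi (f ≫ p) := conf_epi hS hnconf
    exact epi_comp _ _
  have hPcoker : IsColimit (CokernelCofork.ofπ (biprod.fst ≫ (f ≫ p)) hν0) := by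
    refine CokernelCofork.IsColimit.ofπ' _ _ fun {E} s hs => ?_
    suffices hex : ∃ σ : C₀ ⟶ E, (biprod.fst ≫ (f ≫ p)) ≫ σ = s from ⟨hex.choose, hex.choose_spec⟩
    have hinr : biprod.inr ≫ s = 0 := by
      have := biprod.inr ≫= hs
      simpa using this
    have hinl : n ≫ biprod.inl ≫ s = 0 := by
      have := biprod.inl ≫= hs
      simpa using this
    obtain ⟨σ, hσ⟩ := conf_desc hS hnconf (biprod.inl ≫ s)
      (by rw [← Category.assoc] at hinl ⊢; rw [← biprod.inl_map (f := n) (g := 𝟙 K)] at hinl;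
          simpa [Category.assoc] using hinl)
    refine ⟨σ, ?_⟩
    apply biprod.hom_ext'
    · calc biprod.inl ≫ (biprod.fst ≫ (f ≫ p)) ≫ σ = (f ≫ p) ≫ σ := by
            simp [← Category.assoc]
        _ = biprod.inl ≫ s := hσ
    · simp [← Category.assoc, hinr]
  obtain ⟨Q₀, c₀, hc₀⟩ := hνinfl
  have hνconf : S.IsConflation (biprod.map n (𝟙 K)) (biprod.fst ≫ (f ≫ p)) :=
    conf_of_cokernel hS hc₀ hν0 hPcoker
  -- the split "shear" conflation `N ↣ N ⊞ K ↠ K`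
  have hshear : S.IsConflation (biprod.lift (𝟙 N) (-ζ)) (biprod.desc ζ (𝟙 K)) := by
    have hss : (𝟙 (N ⊞ K) + biprod.fst ≫ ζ ≫ biprod.inr) ≫
        (𝟙 (N ⊞ K) - biprod.fst ≫ ζ ≫ biprod.inr) = 𝟙 _ := by
      apply biprod.hom_ext' <;>
        simp [Preadditive.comp_add, Preadditive.comp_sub, Preadditive.add_comp,
          Preadditive.sub_comp]
    have hss' : (𝟙 (N ⊞ K) - biprod.fst ≫ ζ ≫ biprod.inr) ≫
        (𝟙 (N ⊞ K) + biprod.fst ≫ ζ ≫ biprod.inr) = 𝟙 _ := by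
      apply biprod.hom_ext' <;>
        simp [Preadditive.comp_add, Preadditive.comp_sub, Preadditive.add_comp,
          Preadditive.sub_comp]
    have h2 := hS.iso_closed (Iso.refl N)
      (Iso.mk (𝟙 (N ⊞ K) + biprod.fst ≫ ζ ≫ biprod.inr)
        (𝟙 (N ⊞ K) - biprod.fst ≫ ζ ≫ biprod.inr) hss hss') (Iso.refl K)
      (conf_inl_snd hS N K)
    simp only [Iso.refl_hom, Iso.refl_inv, Category.comp_id, Category.id_comp] at h2
    have e1 : (biprod.inl : N ⟶ N ⊞ K) ≫ (𝟙 (N ⊞ K) - biprod.fst ≫ ζ ≫ biprod.inr) =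
        biprod.lift (𝟙 N) (-ζ) := by
      apply biprod.hom_ext <;>
        simp [Preadditive.comp_sub, Preadditive.sub_comp]
    have e2 : (𝟙 (N ⊞ K) + biprod.fst ≫ ζ ≫ biprod.inr) ≫ (biprod.snd : N ⊞ K ⟶ K) =
        biprod.desc ζ (𝟙 K) := by
      apply biprod.hom_ext' <;>
        simp [Preadditive.comp_add, Preadditive.add_comp]
    rwa [e1, e2] at h2
  -- apply the Noether lemma
  have hltν : biprod.lift (𝟙 N) (-ζ) ≫ biprod.map n (𝟙 K) = biprod.lift n (-ζ) := by
    apply biprod.hom_ext <;> simp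
  have hπconf : S.IsConflation (biprod.lift (𝟙 N) (-ζ) ≫ biprod.map n (𝟙 K))
      (biprod.desc f k) := by rw [hltν]; exact hw₂conf
  obtain ⟨x', y', hconf', hx', hy'⟩ := conf_noether hS hshear hνconf hπconf
  have hy'p : y' = p := by
    haveI : Epi (biprod.desc f k) := defl_epi hS ⟨_, _, hw₂conf⟩
    rw [← cancel_epi (biprod.desc f k), hy']
    apply biprod.hom_ext' <;> simp [hk0]
  rw [hy'p] at hconf'
  exact ⟨K, x', hconf'⟩

/-- In a weakly idempotent complete exact category, if `f ≫ g` is a deflation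
then so is `g`. -/
lemma defl_of_comp_defl (hS : S.IsExactStructure) (hWIC : WeaklyIdempotentComplete C)
    {A B C₀ : C} {f : A ⟶ B} {g : B ⟶ C₀} (h : S.IsDeflation (f ≫ g)) :
    S.IsDeflation g := by
  obtain ⟨D, h', g', pb, hg'⟩ := hS.pullback_deflation (f ≫ g) g h
  let u : A ⟶ D := pb.lift (𝟙 A) f (by simp)
  have hu₁ : u ≫ h' = 𝟙 A := pb.lift_fst _ _ _
  have hu₂ : u ≫ g' = f := pb.lift_snd _ _ _
  haveI : HasCokernel u := hWIC u ⟨h', hu₁⟩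
  let c : D ⟶ cokernel u := cokernel.π u
  haveI : Epi c := coequalizer.π_epi
  have hj0 : u ≫ (𝟙 D - h' ≫ u) = 0 := by
    rw [Preadditive.comp_sub, Category.comp_id, ← Category.assoc, hu₁, Category.id_comp,
      sub_self]
  let j : cokernel u ⟶ D := cokernel.desc u (𝟙 D - h' ≫ u) hj0
  have hcj : c ≫ j = 𝟙 D - h' ≫ u := cokernel.π_desc _ _ _
  have hjc : j ≫ c = 𝟙 _ := by
    rw [← cancel_epi c, ← Category.assoc, hcj, Preadditive.sub_comp, Category.id_comp,
      Category.assoc, cokernel.condition, comp_zero, sub_zero, Category.comp_id]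
  have hjh' : j ≫ h' = 0 := by
    rw [← cancel_epi c, ← Category.assoc, hcj, Preadditive.sub_comp, Category.id_comp,
      Category.assoc, hu₁, Category.comp_id, sub_self, comp_zero]
  -- `t := j ≫ g'` is a kernel of `g`
  have ht0 : (j ≫ g') ≫ g = 0 := by
    rw [Category.assoc, ← pb.w, ← Category.assoc, hjh', zero_comp]
  haveI : Mono (j ≫ g') := by
    refine ⟨fun {E} a b hab => ?_⟩
    have : (a - b) ≫ j ≫ g' = 0 := by
      rw [Preadditive.sub_comp, hab, sub_self]
    have hj2 : (a - b) ≫ j = 0 := by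
      apply pb.hom_ext
      · rw [Category.assoc, hjh', comp_zero, zero_comp]
      · rw [zero_comp, Category.assoc]; exact this
    have := (a - b) ≫= hjc
    rw [← Category.assoc, hj2, zero_comp, Category.comp_id] at this
    exact sub_eq_zero.mp this.symm
  have hklim : IsLimit (KernelFork.ofι (j ≫ g') ht0) := by
    refine KernelFork.IsLimit.ofι' _ _ fun {E} v hv => ?_
    let vv : E ⟶ D := pb.lift 0 v (by rw [zero_comp, hv])
    have hvv₁ : vv ≫ h' = 0 := pb.lift_fst _ _ _
    have hvv₂ : vv ≫ g' = v := pb.lift_snd _ _ _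
    refine ⟨vv ≫ c, ?_⟩
    have hstep : (c ≫ j) ≫ g' = g' - h' ≫ u ≫ g' := by
      rw [hcj, Preadditive.sub_comp, Category.id_comp, Category.assoc]
    calc (vv ≫ c) ≫ j ≫ g' = vv ≫ (c ≫ j) ≫ g' := by simp only [Category.assoc]
      _ = vv ≫ g' - vv ≫ h' ≫ u ≫ g' := by rw [hstep, Preadditive.comp_sub]
      _ = v := by rw [hvv₂, ← Category.assoc, hvv₁, zero_comp, sub_zero]
  exact defl_of_comp_defl_of_kernel hS ht0 hklim h

end ExactLemmas3

end ConflationStruct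

end TauTilting
namespace TauTilting

namespace ConflationStruct

section FacLemmas

variable {C : Type u} [Category.{v} C] [Preadditive C] {S : ConflationStruct C}
variable [HasZeroObject C] [HasBinaryBiproducts C]

set_option linter.unusedSectionVars false
set_option maxHeartbeats 1000000

/-- `Fac T` is closed under extensions. -/
lemma fac_ext_closed (hS : S.IsExactStructure) {T : Set C} (hT : S.IsTauRigid T)
    {X Y Z : C} {f : X ⟶ Y} {g : Y ⟶ Z} (hc : S.IsConflation f g)
    (hX : X ∈ S.Fac T) (hZ : Z ∈ S.Fac T) : Y ∈ S.Fac T := by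
  obtain ⟨TZ, tz, hTZ, htz⟩ := hZ
  obtain ⟨TX, tx, hTX, htx⟩ := hX
  obtain ⟨W, w, g', x, hconf, hxw, hcomm, hwdef⟩ := conf_pullback hS hc tz
  have hw : S.IsDeflation w := hwdef htz
  obtain ⟨s, hs⟩ := hT.2 TZ hTZ X ⟨TX, tx, hTX, htx⟩ W x g' hconf
  have hgs : (𝟙 W - g' ≫ s) ≫ g' = 0 := by
    rw [Preadditive.sub_comp, Category.id_comp, Category.assoc, hs, Category.comp_id, sub_self]
  obtain ⟨ρ, hρ⟩ := conf_lift hS hconf _ hgs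
  have hxg' : x ≫ g' = 0 := conf_w hS hconf
  haveI : Mono x := conf_mono hS hconf
  have hxρ : x ≫ ρ = 𝟙 X := by
    rw [← cancel_mono x, Category.assoc, hρ, Preadditive.comp_sub, Category.comp_id,
      Category.id_comp, ← Category.assoc, hxg', zero_comp, sub_zero]
  have hsρ : s ≫ ρ = 0 := by
    rw [← cancel_mono x, Category.assoc, hρ, Preadditive.comp_sub, Category.comp_id,
      ← Category.assoc, hs, Category.id_comp, sub_self, zero_comp]
  have h1 : biprod.desc x s ≫ biprod.lift ρ g' = 𝟙 _ := by
    apply biprod.hom_ext'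
    · rw [← Category.assoc, biprod.inl_desc]
      apply biprod.hom_ext
      · rw [Category.assoc, biprod.lift_fst, hxρ]; simp
      · rw [Category.assoc, biprod.lift_snd, hxg']; simp
    · rw [← Category.assoc, biprod.inr_desc]
      apply biprod.hom_ext
      · rw [Category.assoc, biprod.lift_fst, hsρ]; simp
      · rw [Category.assoc, biprod.lift_snd, hs]; simp
  have h2 : biprod.lift ρ g' ≫ biprod.desc x s = 𝟙 W := by
    rw [biprod.lift_desc, hρ, sub_add_cancel]
  haveI : IsIso (biprod.desc x s) := ⟨biprod.lift ρ g', h1, h2⟩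
  refine ⟨TX ⊞ TZ, biprod.map tx (𝟙 TZ) ≫ biprod.desc x s ≫ w,
    hT.1.biprod_mem hTX hTZ, ?_⟩
  exact hS.deflation_comp (defl_map_left hS htx TZ)
    (hS.deflation_comp (defl_of_isIso hS _) hw)

/-- Objects of `T` are projective relative to `Fac T`. -/
lemma proj_rel_of_mem (hS : S.IsExactStructure) {T : Set C} (hT : S.IsTauRigid T)
    {T' : C} (hT' : T' ∈ T) : S.IsProjRel (S.Fac T) T' := by
  refine ⟨⟨T', 𝟙 T', hT', hS.id_deflation T'⟩, ?_⟩
  intro Y Z gYZ hY hZ hdefl u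
  obtain ⟨X, f, hXfac, hconf⟩ := hdefl
  obtain ⟨W, w, g', x, hconf', hxw, hcomm, -⟩ := conf_pullback hS hconf u
  obtain ⟨s, hs⟩ := hT.2 T' hT' X hXfac W x g' hconf'
  refine ⟨s ≫ w, ?_⟩
  rw [Category.assoc, hcomm, ← Category.assoc, hs, Category.id_comp]

/-- Every object of `Fac T` admits a conflation `Y ↣ Z ↠ X` with `Y ∈ Fac T`, `Z ∈ T`. -/
lemma fac_enough (hS : S.IsExactStructure) (hP : S.HasEnoughProjectives)
    (hWIC : WeaklyIdempotentComplete C) {T : Set C} (hT : S.IsSupportTauTilting T)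
    {X : C} (hX : X ∈ S.Fac T) :
    ∃ (Y Z : C) (i : Y ⟶ Z) (p : Z ⟶ X), Y ∈ S.Fac T ∧ Z ∈ T ∧ S.IsConflation i p := by
  obtain ⟨TX, a, hTX, X₁, hh, hha⟩ := hX
  obtain ⟨P, b, hPproj, hb⟩ := hP X₁
  obtain ⟨K, T0, T1, d, i, g, hT1, hd, hig, happx⟩ := hT.2 P hPproj
  have hT0 : T0 ∈ T := happx.1
  obtain ⟨s, hfs⟩ := happx.2 TX hTX (b ≫ hh)
  haveI hdepi : Epi d := defl_epi hS hd
  have hisa : i ≫ s ≫ a = 0 := by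
    have h1 : d ≫ i ≫ s ≫ a = d ≫ 0 := by
      calc d ≫ i ≫ s ≫ a = (((d ≫ i) ≫ s) ≫ a) := by simp only [Category.assoc]
        _ = (b ≫ hh) ≫ a := by rw [hfs]
        _ = d ≫ 0 := by rw [Category.assoc, conf_w hS hha, comp_zero, comp_zero]
    exact (cancel_epi d).mp h1
  have hisa' : (i ≫ s) ≫ a = 0 := by rw [Category.assoc]; exact hisa
  obtain ⟨e, he⟩ := conf_lift hS hha (i ≫ s) hisa'
  haveI : Mono hh := conf_mono hS hha
  have hde : d ≫ e = b := by
    rw [← cancel_mono hh, Category.assoc, he]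
    calc d ≫ i ≫ s = ((d ≫ i) ≫ s) := by simp only [Category.assoc]
      _ = b ≫ hh := hfs
  have hedefl : S.IsDeflation e := defl_of_comp_defl hS hWIC (hde ▸ hb)
  obtain ⟨L, l, hle⟩ := hedefl
  have hliinfl : S.IsInflation (l ≫ i) := hS.inflation_comp ⟨_, _, hle⟩ ⟨_, _, hig⟩
  obtain ⟨Q, cq, hQconf⟩ := hliinfl
  have hQfac : Q ∈ S.Fac T := ⟨T0, cq, hT0, ⟨_, _, hQconf⟩⟩
  obtain ⟨δ, hδ⟩ := conf_desc hS hig (s ≫ a) hisa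
  -- `p = desc a δ` is a deflation
  have hp0 : biprod.map (𝟙 TX) g ≫ biprod.desc a δ = biprod.desc a (s ≫ a) := by
    apply biprod.hom_ext'
    · rw [← Category.assoc, biprod.inl_map, biprod.inl_desc, Category.id_comp, biprod.inl_desc]
    · rw [← Category.assoc, biprod.inr_map, Category.assoc, biprod.inr_desc, hδ,
        biprod.inr_desc]
  have hq' : biprod.desc (𝟙 TX) s ≫ a = biprod.desc a (s ≫ a) := by
    apply biprod.hom_ext'
    · rw [← Category.assoc, biprod.inl_desc, Category.id_comp, biprod.inl_desc]
    · rw [← Category.assoc, biprod.inr_desc, biprod.inr_desc]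
  have hshear : (𝟙 (TX ⊞ T0) + biprod.snd ≫ s ≫ biprod.inl) ≫ biprod.fst =
      biprod.desc (𝟙 TX) s := by
    apply biprod.hom_ext' <;>
      simp [Preadditive.add_comp, Preadditive.comp_add]
  haveI : IsIso (𝟙 (TX ⊞ T0) + biprod.snd ≫ s ≫ biprod.inl) := by
    refine ⟨𝟙 _ - biprod.snd ≫ s ≫ biprod.inl, ?_, ?_⟩ <;>
      · apply biprod.hom_ext' <;>
          simp [Preadditive.add_comp, Preadditive.comp_add, Preadditive.sub_comp,
            Preadditive.comp_sub]
  have hp0defl : S.IsDeflation (biprod.desc a (s ≫ a)) := by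
    rw [← hq', ← hshear, Category.assoc]
    exact hS.deflation_comp (defl_of_isIso hS _)
      (hS.deflation_comp (defl_fst hS _ _) ⟨_, _, hha⟩)
  have hpdefl : S.IsDeflation (biprod.desc a δ) :=
    defl_of_comp_defl hS hWIC (hp0 ▸ hp0defl)
  -- the induced map `m : Q ⟶ TX ⊞ T1`
  have hlin : (l ≫ i) ≫ biprod.lift (-s) g = 0 := by
    apply biprod.hom_ext
    · rw [Category.assoc, biprod.lift_fst, zero_comp, Preadditive.comp_neg, neg_eq_zero,
        Category.assoc, ← he, ← Category.assoc, conf_w hS hle, zero_comp]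
    · rw [Category.assoc, biprod.lift_snd, zero_comp, Category.assoc, conf_w hS hig,
        comp_zero]
  obtain ⟨m, hm⟩ := conf_desc hS hQconf (biprod.lift (-s) g) hlin
  haveI hcqepi : Epi cq := conf_epi hS hQconf
  have hm0 : m ≫ biprod.desc a δ = 0 := by
    rw [← cancel_epi cq, ← Category.assoc, hm, biprod.lift_desc, Preadditive.neg_comp, hδ,
      neg_add_cancel, comp_zero]
  haveI hmmono : Mono m := by
    refine Preadditive.mono_of_cancel_zero _ (fun {E} α hα => ?_)
    obtain ⟨W', τ, β, pb2, hβ⟩ := hS.pullback_deflation cq α ⟨_, _, hQconf⟩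
    have hτn : τ ≫ biprod.lift (-s) g = 0 := by
      rw [← hm, ← Category.assoc, pb2.w, Category.assoc, hα, comp_zero]
    have hτs : τ ≫ s = 0 := by
      have h1 := hτn =≫ biprod.fst
      rw [Category.assoc, biprod.lift_fst, zero_comp, Preadditive.comp_neg, neg_eq_zero] at h1
      exact h1
    have hτg : τ ≫ g = 0 := by
      have h1 := hτn =≫ biprod.snd
      rwa [Category.assoc, biprod.lift_snd, zero_comp] at h1
    obtain ⟨κ, hκ⟩ := conf_lift hS hig τ hτg
    have hκe : κ ≫ e = 0 := by
      rw [← cancel_mono hh, Category.assoc, he, zero_comp, ← Category.assoc, hκ]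
      exact hτs
    obtain ⟨lam, hlam⟩ := conf_lift hS hle κ hκe
    have hβα : β ≫ α = 0 := by
      rw [← pb2.w, ← hκ, ← hlam, Category.assoc, Category.assoc, ← Category.assoc l,
        conf_w hS hQconf, comp_zero]
    haveI : Epi β := defl_epi hS hβ
    rw [← cancel_epi β, hβα, comp_zero]
  -- `m` is a kernel of `desc a δ`
  have hker : IsLimit (KernelFork.ofι m hm0) := by
    refine KernelFork.IsLimit.ofι' _ _ fun {E} t ht => ?_
    suffices hex : ∃ ρ : E ⟶ Q, ρ ≫ m = t from ⟨hex.choose, hex.choose_spec⟩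
    have ht' : t ≫ biprod.fst ≫ a + t ≫ biprod.snd ≫ δ = 0 := by
      have hdec : biprod.desc a δ = biprod.fst ≫ a + biprod.snd ≫ δ := by
        apply biprod.hom_ext' <;>
          simp [Preadditive.comp_add]
      rw [hdec, Preadditive.comp_add, ← Category.assoc, ← Category.assoc] at ht
      simpa [Category.assoc] using ht
    obtain ⟨W₁, θ, β₁, pbg, hβ₁⟩ := hS.pullback_deflation g (t ≫ biprod.snd) ⟨_, _, hig⟩
    have hθg : θ ≫ g = β₁ ≫ t ≫ biprod.snd := pbg.w
    have hξa : (β₁ ≫ t ≫ biprod.fst + θ ≫ s) ≫ a = 0 := by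
      simp only [Preadditive.add_comp, Category.assoc]
      rw [show s ≫ a = g ≫ δ from hδ.symm, ← Category.assoc θ, hθg]
      simp only [Category.assoc]
      rw [← Preadditive.comp_add, ht', comp_zero]
    obtain ⟨χ, hχ⟩ := conf_lift hS hha (β₁ ≫ t ≫ biprod.fst + θ ≫ s) hξa
    obtain ⟨W₂, κ, β₂, pbe, hβ₂⟩ := hS.pullback_deflation e χ ⟨_, _, hle⟩
    have hκe : κ ≫ e = β₂ ≫ χ := pbe.w
    have hκis : κ ≫ i ≫ s = β₂ ≫ β₁ ≫ t ≫ biprod.fst + β₂ ≫ θ ≫ s := by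
      rw [← he, ← Category.assoc, hκe, Category.assoc, hχ, Preadditive.comp_add]
    have hσn : (β₂ ≫ θ - κ ≫ i) ≫ biprod.lift (-s) g = (β₂ ≫ β₁) ≫ t := by
      apply biprod.hom_ext
      · simp only [Preadditive.sub_comp, Preadditive.comp_neg, Category.assoc,
          biprod.lift_fst]
        rw [hκis]
        abel
      · simp only [Preadditive.sub_comp, Category.assoc, biprod.lift_snd]
        rw [conf_w hS hig, comp_zero, sub_zero, hθg]
    have hββ : S.IsDeflation (β₂ ≫ β₁) := hS.deflation_comp hβ₂ hβ₁
    obtain ⟨Nb, ν, hν⟩ := hββ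
    have hνσ : ν ≫ ((β₂ ≫ θ - κ ≫ i) ≫ cq) = 0 := by
      rw [← cancel_mono m, zero_comp]
      simp only [Category.assoc]
      rw [hm, hσn, ← Category.assoc, conf_w hS hν, zero_comp]
    obtain ⟨ρ, hρ⟩ := conf_desc hS hν ((β₂ ≫ θ - κ ≫ i) ≫ cq) hνσ
    refine ⟨ρ, ?_⟩
    haveI : Epi (β₂ ≫ β₁) := defl_epi hS ⟨Nb, ν, hν⟩
    rw [← cancel_epi (β₂ ≫ β₁), ← Category.assoc, hρ, Category.assoc, hm, hσn]
  obtain ⟨Y₀, y₀, hy₀⟩ := hpdefl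
  exact ⟨Q, TX ⊞ T1, m, biprod.desc a δ, hQfac, hT.1.1.biprod_mem hTX hT1,
    conf_of_kernel hS hy₀ hm0 hker⟩

end FacLemmas

end ConflationStruct

end TauTilting

namespace TauTilting

/-- for a support τ-tilting subcategory `T` of a weakly idempotent
complete exact category, `Fac T` is closed under extensions and the exact category
`Fac T` has enough projectives given by `T`. -/
theorem fac_has_enough_projectives
    {C : Type u} [Category.{v} C] [Preadditive C] [HasZeroObject C] [HasBinaryBiproducts C]
    (S : ConflationStruct C) (hS : S.IsExactStructure) (hP : S.HasEnoughProjectives)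
    (hWIC : WeaklyIdempotentComplete C)
    (T : Set C) (hT : S.IsSupportTauTilting T) :
    (∀ {X Y Z : C} {f : X ⟶ Y} {g : Y ⟶ Z}, S.IsConflation f g →
        X ∈ S.Fac T → Z ∈ S.Fac T → Y ∈ S.Fac T) ∧
    (∀ T' ∈ T, S.IsProjRel (S.Fac T) T') ∧
    (∀ X ∈ S.Fac T, ∃ (Y Z : C) (i : Y ⟶ Z) (p : Z ⟶ X),
        Y ∈ S.Fac T ∧ Z ∈ T ∧ S.IsConflation i p) := by
  refine ⟨fun {X Y Z f g} hc hX hZ =>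
      ConflationStruct.fac_ext_closed hS hT.1 hc hX hZ,
    fun T' hT' => ConflationStruct.proj_rel_of_mem hS hT.1 hT',
    fun X hX => ConflationStruct.fac_enough hS hP hWIC hT hX⟩

end TauTilting
end
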